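/- arXiv:0910.2454 — 6 statements merged into one kernel-verified Lean document; each statement's English description precedes it below -/
import Mathlib

section
/- Let f,g ∈ 𝒜 with ∥f∥_∞ < 1/2 and ∥g∥_∞ < 1/2. Then the series G(t) := Σ_{m≥0} t^m S_m(f,g)/(m!)² converges absolutely for every t ∈ [0,1]; moreover, for every integer n ≥ 1, G is n times differentiable on [0,1], its n-th derivative is obtained by termwise differentiation, G^{(n)}(t) = Σ_{m≥n} t^{m−n} S_m(f,g)/(m!(m−n)!), and in particular S_n(f,g) = n! · G^{(n)}(0). (This is Lemma 2 of the paper: ⟨B_f^{+n}Φ, B_g^{+n}Φ⟩ = n! (d^n/dt^n)|_{t=0} ⟨Ψ(tf),Ψ(g)⟩.) -/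
open MeasureTheory Complex Finset
open scoped Nat ENNReal

noncomputable section

/-- The domain `ℝ^d`. -/
abbrev Dom (d : ℕ) := Fin d → ℝ

/-- Membership in `𝒜 = L²(ℝ^d) ∩ L^∞(ℝ^d)`. -/
def MemA (d : ℕ) (f : Dom d → ℂ) : Prop :=
  MemLp f 2 (volume : Measure (Dom d)) ∧ MemLp f ⊤ (volume : Measure (Dom d))

/-- `⟨f^k, g^k⟩`, the power inner products. -/
def pip (d : ℕ) (f g : Dom d → ℂ) (k : ℕ) : ℂ :=
  ∫ x : Dom d, (starRingEnd ℂ) (f x) ^ k * g x ^ k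

/-- `S_n(f,g)`, the inner product of quadratic `n`-particle vectors. -/
def Sker (c : ℝ) (d : ℕ) (f g : Dom d → ℂ) (n : ℕ) : ℂ :=
  ∑ p : Nat.Partition n,
    (n ! : ℂ) ^ 2 * 2 ^ (2 * n - 1) *
      ∏ j ∈ p.parts.toFinset,
        (c : ℂ) ^ p.parts.count j /
            (((p.parts.count j)! : ℂ) * (j : ℂ) ^ p.parts.count j) *
          pip d f g j ^ p.parts.count j

/-- `K(f,g) = ⟨Ψ(f),Ψ(g)⟩`, the inner product of quadratic exponential vectors. -/
def Kker (c : ℝ) (d : ℕ) (f g : Dom d → ℂ) : ℂ :=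
  Complex.exp (-(c / 2 : ℂ) *
    ∫ x : Dom d, Complex.log (1 - 4 * (starRingEnd ℂ) (f x) * g x))


lemma summable_geom_bound {b : ℕ → ℂ} {A q : ℝ} (hq0 : 0 ≤ q)
    (hb : ∀ m : ℕ, ‖b m‖ ≤ A * q ^ m) {x : ℂ} (hx : ‖x‖ * q < 1) :
    Summable (fun m => ‖x ^ m * b m‖) := by
  have hA0 : 0 ≤ A := by
    have h0 := hb 0
    rw [pow_zero, mul_one] at h0
    exact le_trans (norm_nonneg _) h0
  refine Summable.of_nonneg_of_le (fun m => norm_nonneg _) (fun m => ?_)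
    (((summable_geometric_of_lt_one (by positivity) hx).mul_left A))
  rw [norm_mul, norm_pow]
  calc ‖x‖ ^ m * ‖b m‖ ≤ ‖x‖ ^ m * (A * q ^ m) := by
        exact mul_le_mul_of_nonneg_left (hb m) (by positivity)
    _ = A * (‖x‖ * q) ^ m := by rw [mul_pow]; ring

lemma shift_coef_bound {b : ℕ → ℂ} {A q : ℝ} (hq0 : 0 < q) (hq1 : q < 1)
    (hb : ∀ m : ℕ, ‖b m‖ ≤ A * q ^ m) :
    ∃ A' q' : ℝ, 0 < q' ∧ q' < 1 ∧ ∀ m : ℕ, ‖((m : ℂ) + 1) * b (m + 1)‖ ≤ A' * q' ^ m := by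
  have hA0 : 0 ≤ A := by
    have h0 := hb 0
    rw [pow_zero, mul_one] at h0
    exact le_trans (norm_nonneg _) h0
  set q' : ℝ := (q + 1) / 2 with hq'
  have hq'0 : 0 < q' := by positivity
  have hqq' : q < q' := by simp only [hq']; linarith
  have hq'1 : q' < 1 := by simp only [hq']; linarith
  set x : ℝ := q / q' with hxdef
  have hx0 : 0 ≤ x := by positivity
  have hx1 : x < 1 := by
    rw [hxdef, div_lt_one hq'0]; exact hqq'
  have hsum : Summable (fun k : ℕ => (k + 1 : ℝ) * x ^ k) := by
    have h1 : Summable (fun k : ℕ => (k : ℝ) ^ 1 * x ^ k) :=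
      summable_pow_mul_geometric_of_norm_lt_one 1 (by rwa [Real.norm_eq_abs, _root_.abs_of_nonneg hx0])
    have h2 : Summable (fun k : ℕ => x ^ k) := summable_geometric_of_lt_one hx0 hx1
    simpa [add_mul, pow_one] using h1.add h2
  set C : ℝ := ∑' k : ℕ, (k + 1 : ℝ) * x ^ k with hC
  refine ⟨A * q * C, q', hq'0, hq'1, fun m => ?_⟩
  have hle : (m + 1 : ℝ) * x ^ m ≤ C := Summable.le_tsum hsum m (fun k _ => by positivity)
  have h1 : ‖((m : ℂ) + 1) * b (m + 1)‖ = (m + 1 : ℝ) * ‖b (m + 1)‖ := by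
    rw [norm_mul]
    congr 1
    have : ((m : ℂ) + 1) = ((m + 1 : ℕ) : ℂ) := by push_cast; ring
    rw [this, Complex.norm_natCast]; push_cast; ring
  rw [h1]
  calc (m + 1 : ℝ) * ‖b (m + 1)‖ ≤ (m + 1 : ℝ) * (A * q ^ (m + 1)) := by
        exact mul_le_mul_of_nonneg_left (hb (m + 1)) (by positivity)
    _ = (A * q) * ((m + 1 : ℝ) * q ^ m) := by ring
    _ ≤ (A * q) * (C * q' ^ m) := by
        refine mul_le_mul_of_nonneg_left ?_ (by positivity)
        have hqm : q ^ m = x ^ m * q' ^ m := by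
          rw [← mul_pow, hxdef, div_mul_cancel₀]; exact ne_of_gt hq'0
        rw [hqm, ← mul_assoc]
        exact mul_le_mul_of_nonneg_right hle (by positivity)
    _ = A * q * C * q' ^ m := by ring

lemma hasDerivAt_tsum_coef {b : ℕ → ℂ} {A q : ℝ} (hq0 : 0 < q) (hq1 : q < 1)
    (hb : ∀ m : ℕ, ‖b m‖ ≤ A * q ^ m) {x : ℝ} (hx : |x| ≤ 1) :
    HasDerivAt (fun t : ℝ => ∑' m : ℕ, (t : ℂ) ^ m * b m)
      (∑' m : ℕ, (x : ℂ) ^ m * (((m : ℂ) + 1) * b (m + 1))) x := by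
  have hA0 : 0 ≤ A := by
    have h0 := hb 0
    rw [pow_zero, mul_one] at h0
    exact le_trans (norm_nonneg _) h0
  set r : ℝ := (1 + 1 / q) / 2 with hrdef
  have hinvq : 1 < 1 / q := by
    rw [lt_div_iff₀ hq0]; linarith
  have hr1 : 1 < r := by rw [hrdef]; linarith
  have hr0 : 0 < r := by linarith
  have hrq : r * q < 1 := by
    have : r < 1 / q := by rw [hrdef]; linarith
    calc r * q < (1 / q) * q := by exact mul_lt_mul_of_pos_right this hq0
      _ = 1 := by field_simp
  set s : Set ℝ := Metric.ball (0 : ℝ) r with hsdef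
  have hs_open : IsOpen s := Metric.isOpen_ball
  have hs_conn : IsPreconnected s := (convex_ball (0:ℝ) r).isPreconnected
  have hmem : ∀ t : ℝ, |t| < r → t ∈ s := by
    intro t ht; simpa [hsdef, Real.dist_eq] using ht
  have hxs : x ∈ s := hmem x (lt_of_le_of_lt hx hr1)
  have h0s : (0 : ℝ) ∈ s := hmem 0 (by simpa using hr0)
  -- the series of shifted terms
  set F : ℕ → ℝ → ℂ := fun m t => (t : ℂ) ^ (m + 1) * b (m + 1) with hF
  set F' : ℕ → ℝ → ℂ := fun m t => ((m : ℂ) + 1) * (t : ℂ) ^ m * b (m + 1) with hF'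
  set u : ℕ → ℝ := fun m => (m + 1 : ℝ) * r ^ m * (A * q ^ (m + 1)) with hu
  have hu_sum : Summable u := by
    have hrq0 : 0 ≤ r * q := by positivity
    have h1 : Summable (fun k : ℕ => (k : ℝ) ^ 1 * (r * q) ^ k) :=
      summable_pow_mul_geometric_of_norm_lt_one 1
        (by rwa [Real.norm_eq_abs, _root_.abs_of_nonneg hrq0])
    have h2 : Summable (fun k : ℕ => (r * q) ^ k) := summable_geometric_of_lt_one hrq0 hrq
    have h3 : Summable (fun k : ℕ => (k + 1 : ℝ) * (r * q) ^ k) := by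
      simpa [add_mul, pow_one] using h1.add h2
    have : u = fun m : ℕ => (A * q) * ((m + 1 : ℝ) * (r * q) ^ m) := by
      funext m; simp only [hu, mul_pow]; ring
    rw [this]
    exact h3.mul_left _
  have hFderiv : ∀ (m : ℕ) (t : ℝ), t ∈ s → HasDerivAt (F m) (F' m t) t := by
    intro m t _
    have h1 : HasDerivAt (fun y : ℝ => y ^ (m + 1)) ((m + 1 : ℝ) * t ^ m) t := by
      simpa using hasDerivAt_pow (m + 1) t
    have h2 := (h1.ofReal_comp (z := t)).mul_const (b (m + 1))
    have e1 : (fun y : ℝ => ((y ^ (m + 1) : ℝ) : ℂ) * b (m + 1)) = F m := by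
      funext y; simp only [hF]; push_cast; ring
    have e2 : (((m + 1 : ℝ) * t ^ m : ℝ) : ℂ) * b (m + 1) = F' m t := by
      simp only [hF']; push_cast; ring
    rw [e1, e2] at h2
    exact h2
  have hFbound : ∀ (m : ℕ) (t : ℝ), t ∈ s → ‖F' m t‖ ≤ u m := by
    intro m t ht
    have htr : |t| < r := by simpa [hsdef, Real.dist_eq] using ht
    simp only [hF', hu, norm_mul]
    have e1 : ‖(m : ℂ) + 1‖ = (m + 1 : ℝ) := by
      have : ((m : ℂ) + 1) = ((m + 1 : ℕ) : ℂ) := by push_cast; ring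
      rw [this, Complex.norm_natCast]; push_cast; ring
    have e2 : ‖(t : ℂ) ^ m‖ ≤ r ^ m := by
      rw [norm_pow, Complex.norm_real, Real.norm_eq_abs]
      exact pow_le_pow_left₀ (abs_nonneg t) htr.le m
    rw [e1]
    have h5 : (m + 1 : ℝ) * ‖(t : ℂ) ^ m‖ * ‖b (m + 1)‖
        ≤ (m + 1 : ℝ) * r ^ m * (A * q ^ (m + 1)) := by
      apply mul_le_mul
      · exact mul_le_mul_of_nonneg_left e2 (by positivity)
      · exact hb (m + 1)
      · exact norm_nonneg _
      · positivity
    exact h5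
  have hF0 : Summable (fun m : ℕ => F m 0) := by
    have : (fun m : ℕ => F m 0) = fun _ => (0 : ℂ) := by
      funext m; simp [hF]
    rw [this]; exact summable_zero
  have main : HasDerivAt (fun z : ℝ => ∑' m : ℕ, F m z) (∑' m : ℕ, F' m x) x :=
    hasDerivAt_tsum_of_isPreconnected hu_sum hs_open hs_conn hFderiv hFbound h0s hF0 hxs
  have hsummable : ∀ t : ℝ, t ∈ s → Summable (fun m : ℕ => (t : ℂ) ^ m * b m) := by
    intro t ht
    have htr : |t| < r := by simpa [hsdef, Real.dist_eq] using ht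
    apply Summable.of_norm
    apply summable_geom_bound hq0.le hb
    rw [Complex.norm_real, Real.norm_eq_abs]
    calc |t| * q < r * q := mul_lt_mul_of_pos_right htr hq0
      _ < 1 := hrq
  have heq : (fun t : ℝ => ∑' m : ℕ, (t : ℂ) ^ m * b m)
      =ᶠ[nhds x] (fun t : ℝ => b 0 + ∑' m : ℕ, F m t) := by
    filter_upwards [hs_open.mem_nhds hxs] with t ht
    have h := Summable.tsum_eq_zero_add (hsummable t ht)
    simpa [hF] using h
  have main2 : HasDerivAt (fun t : ℝ => b 0 + ∑' m : ℕ, F m t) (∑' m : ℕ, F' m x) x :=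
    main.const_add (b 0)
  have final := main2.congr_of_eventuallyEq heq
  refine final.congr_deriv ?_
  apply tsum_congr
  intro m
  simp only [hF']
  ring

lemma parts_le_n {n : ℕ} (p : Nat.Partition n) {j : ℕ} (hj : j ∈ p.parts) : j ≤ n := by
  have := Multiset.single_le_sum (fun x _ => Nat.zero_le x) j hj
  rwa [p.parts_sum] at this

lemma count_le_n {n : ℕ} (p : Nat.Partition n) (j : ℕ) : p.parts.count j ≤ n := by
  calc p.parts.count j ≤ Multiset.card p.parts := Multiset.count_le_card _ _
    _ = Multiset.card p.parts • 1 := by simp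
    _ ≤ p.parts.sum := Multiset.card_nsmul_le_sum (fun x hx => p.parts_pos hx)
    _ = n := p.parts_sum

lemma partition_sum_counts {n : ℕ} (p : Nat.Partition n) :
    ∑ j ∈ p.parts.toFinset, j * p.parts.count j = n := by
  have h : ∑ a ∈ p.parts.toFinset, p.parts.count a * a = p.parts.sum := by
    simpa [smul_eq_mul] using (Finset.sum_multiset_map_count p.parts id).symm
  calc ∑ j ∈ p.parts.toFinset, j * p.parts.count j
      = ∑ j ∈ p.parts.toFinset, p.parts.count j * j :=
        Finset.sum_congr rfl fun j _ => mul_comm _ _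
    _ = p.parts.sum := h
    _ = n := p.parts_sum

lemma partition_prod_le (n : ℕ) (y : ℕ → ℝ) (hy : ∀ j : ℕ, 0 ≤ y j) :
    ∑ p : Nat.Partition n, ∏ j ∈ p.parts.toFinset,
        y j ^ p.parts.count j / (p.parts.count j)!
      ≤ Real.exp (∑ i ∈ Finset.range n, y (i + 1)) := by
  classical
  set w : ℕ → ℕ → ℝ := fun j k => y j ^ k / k ! with hw
  have hw0 : ∀ j k, 0 ≤ w j k := fun j k =>
    div_nonneg (pow_nonneg (hy j) k) (Nat.cast_nonneg _)
  -- Step A : extend the product to all of `range n` (shifted by one)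
  have stepA : ∀ p : Nat.Partition n,
      ∏ j ∈ p.parts.toFinset, w j (p.parts.count j)
        = ∏ i : Fin n, w ((i : ℕ) + 1) (p.parts.count ((i : ℕ) + 1)) := by
    intro p
    have hsub : p.parts.toFinset ⊆ (Finset.range n).image Nat.succ := by
      intro j hj
      rw [Multiset.mem_toFinset] at hj
      have h1 : 0 < j := p.parts_pos hj
      have h2 : j ≤ n := parts_le_n p hj
      refine Finset.mem_image.2 ⟨j - 1, Finset.mem_range.2 ?_, ?_⟩
      · omega
      · omega
    rw [Finset.prod_subset hsub ?hout]
    case hout =>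
      intro j _ hj
      rw [Multiset.mem_toFinset] at hj
      have : p.parts.count j = 0 := Multiset.count_eq_zero.2 hj
      simp [hw, this]
    rw [Finset.prod_image (fun a _ b _ h => Nat.succ_injective h)]
    rw [Fin.prod_univ_eq_prod_range (fun i => w ((i : ℕ) + 1) (p.parts.count ((i : ℕ) + 1))) n]
  -- Step B : compare with the full sum over tuples
  have stepB : ∑ p : Nat.Partition n, ∏ i : Fin n, w ((i : ℕ) + 1) (p.parts.count ((i : ℕ) + 1))
      ≤ ∏ i : Fin n, ∑ k ∈ Finset.range (n + 1), w ((i : ℕ) + 1) k := by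
    rw [Finset.prod_univ_sum]
    set e : Nat.Partition n → (Fin n → ℕ) := fun p i => p.parts.count ((i : ℕ) + 1) with he
    have he_inj : ∀ p₁ ∈ (Finset.univ : Finset (Nat.Partition n)), ∀ p₂ ∈ Finset.univ,
        e p₁ = e p₂ → p₁ = p₂ := by
      intro p₁ _ p₂ _ hep
      apply Nat.Partition.ext
      ext j
      rcases Nat.eq_zero_or_pos j with rfl | hj
      · rw [Multiset.count_eq_zero.2, Multiset.count_eq_zero.2]
        · intro h; exact absurd (p₂.parts_pos h) (lt_irrefl 0)
        · intro h; exact absurd (p₁.parts_pos h) (lt_irrefl 0)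
      · by_cases hjn : j ≤ n
        · have hlt : j - 1 < n := by omega
          have := congrFun hep ⟨j - 1, hlt⟩
          simp only [he] at this
          have hj1 : (⟨j - 1, hlt⟩ : Fin n).val + 1 = j := by simp; omega
          rwa [hj1] at this
        · rw [Multiset.count_eq_zero.2, Multiset.count_eq_zero.2]
          · intro h; exact hjn (parts_le_n p₂ h)
          · intro h; exact hjn (parts_le_n p₁ h)
    have he_mem : ∀ p : Nat.Partition n,
        e p ∈ Fintype.piFinset (fun _ : Fin n => Finset.range (n + 1)) := by
      intro p
      rw [Fintype.mem_piFinset]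
      intro i
      rw [Finset.mem_range]
      exact Nat.lt_succ_of_le (count_le_n p _)
    have h1 : (∑ p : Nat.Partition n, ∏ i : Fin n, w ((i : ℕ) + 1) (p.parts.count ((i : ℕ) + 1)))
        = ∑ v ∈ Finset.univ.image e, ∏ i : Fin n, w ((i : ℕ) + 1) (v i) := by
      rw [Finset.sum_image he_inj]
    have h2 : (∑ v ∈ Finset.univ.image e, ∏ i : Fin n, w ((i : ℕ) + 1) (v i))
        ≤ ∑ v ∈ Fintype.piFinset (fun _ : Fin n => Finset.range (n + 1)),
            ∏ i : Fin n, w ((i : ℕ) + 1) (v i) := by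
      apply Finset.sum_le_sum_of_subset_of_nonneg
      · intro v hv
        rw [Finset.mem_image] at hv
        obtain ⟨p, _, rfl⟩ := hv
        exact he_mem p
      · intro v _ _
        exact Finset.prod_nonneg fun i _ => hw0 _ _
    rw [h1]
    exact h2
  -- Step C : each inner sum is at most an exponential
  have stepC : ∀ i : Fin n, ∑ k ∈ Finset.range (n + 1), w ((i : ℕ) + 1) k
      ≤ Real.exp (y ((i : ℕ) + 1)) := fun i => Real.sum_le_exp_of_nonneg (hy _) (n + 1)
  have hrw : ∑ p : Nat.Partition n, (∏ j ∈ p.parts.toFinset,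
        y j ^ p.parts.count j / (p.parts.count j)!)
      = ∑ p : Nat.Partition n, ∏ i : Fin n, w ((i : ℕ) + 1) (p.parts.count ((i : ℕ) + 1)) :=
    Finset.sum_congr rfl fun p _ => stepA p
  rw [hrw]
  refine le_trans stepB (le_trans (Finset.prod_le_prod
      (fun i _ => Finset.sum_nonneg fun k _ => hw0 _ _) (fun i _ => stepC i)) ?_)
  rw [← Real.exp_sum, Fin.sum_univ_eq_sum_range (fun i => y (i + 1)) n]









lemma pip_bound (d : ℕ) (f g : Dom d → ℂ) {a b : ℝ}
    (hfa : ∀ᵐ x : Dom d ∂(volume : Measure (Dom d)), ‖f x‖ ≤ a)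
    (hgb : ∀ᵐ x : Dom d ∂(volume : Measure (Dom d)), ‖g x‖ ≤ b)
    (hint : MeasureTheory.Integrable (fun x : Dom d => ‖f x‖ * ‖g x‖)
      (volume : Measure (Dom d)))
    (ha : 0 ≤ a) (hb : 0 ≤ b) {j : ℕ} (hj : 1 ≤ j) :
    ‖pip d f g j‖ ≤ (a * b) ^ (j - 1) * ∫ x : Dom d, ‖f x‖ * ‖g x‖ := by
  obtain ⟨i, rfl⟩ : ∃ i, j = i + 1 := ⟨j - 1, (Nat.succ_pred_eq_of_pos hj).symm⟩
  simp only [Nat.add_sub_cancel]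
  have h1 : ‖pip d f g (i + 1)‖ ≤
      ∫ x : Dom d, ‖(starRingEnd ℂ) (f x) ^ (i + 1) * g x ^ (i + 1)‖ :=
    norm_integral_le_integral_norm _
  refine le_trans h1 ?_
  have h2 : (∫ x : Dom d, ‖(starRingEnd ℂ) (f x) ^ (i + 1) * g x ^ (i + 1)‖)
      ≤ ∫ x : Dom d, (a * b) ^ i * (‖f x‖ * ‖g x‖) := by
    apply MeasureTheory.integral_mono_of_nonneg
    · filter_upwards with x
      exact norm_nonneg _
    · exact hint.const_mul _
    · filter_upwards [hfa, hgb] with x hfx hgx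
      rw [norm_mul, norm_pow, norm_pow, RCLike.norm_conj]
      have e1 : ‖f x‖ ^ (i + 1) * ‖g x‖ ^ (i + 1)
          = (‖f x‖ ^ i * ‖g x‖ ^ i) * (‖f x‖ * ‖g x‖) := by ring
      rw [e1, mul_pow]
      apply mul_le_mul_of_nonneg_right _ (by positivity)
      exact mul_le_mul (pow_le_pow_left₀ (norm_nonneg _) hfx i)
        (pow_le_pow_left₀ (norm_nonneg _) hgx i) (by positivity) (by positivity)
  refine le_trans h2 ?_
  rw [MeasureTheory.integral_const_mul]

lemma sker_bound_aux (d : ℕ) (c : ℝ) (hc : 0 < c) (f g : Dom d → ℂ)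
    {M ρ τ : ℝ} (hM0 : 0 ≤ M) (hρ0 : 0 < ρ) (hτρ : ρ < τ)
    (hpip : ∀ j : ℕ, 1 ≤ j → ‖pip d f g j‖ ≤ M * ρ ^ (j - 1)) (n : ℕ) :
    ‖Sker c d f g n‖ ≤
      (n ! : ℝ) ^ 2 * (Real.exp (c * M / (τ - ρ)) * (4 * τ) ^ n) := by
  classical
  have hτ0 : 0 < τ := lt_trans hρ0 hτρ
  have hcM : 0 ≤ c * M := mul_nonneg hc.le hM0
  set y : ℕ → ℝ := fun j => c * M * ρ ^ (j - 1) / (j * τ ^ j) with hydef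
  have hy0 : ∀ j : ℕ, 0 ≤ y j := fun j =>
    div_nonneg (mul_nonneg hcM (pow_nonneg hρ0.le _)) (by positivity)
  have hsumy : ∑ i ∈ Finset.range n, y (i + 1) ≤ c * M / (τ - ρ) := by
    have hx0 : 0 ≤ ρ / τ := by positivity
    have hx1 : ρ / τ < 1 := (div_lt_one hτ0).mpr hτρ
    have hterm : ∀ i : ℕ, y (i + 1) ≤ (c * M / τ) * (ρ / τ) ^ i := by
      intro i
      have h1 : y (i + 1) = c * M * ρ ^ i / ((i + 1) * τ ^ (i + 1)) := by
        simp [hydef]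
      have h2 : c * M * ρ ^ i / ((i + 1 : ℝ) * τ ^ (i + 1))
          ≤ c * M * ρ ^ i / τ ^ (i + 1) := by
        apply div_le_div_of_nonneg_left
          (mul_nonneg hcM (pow_nonneg hρ0.le i)) (by positivity)
        nlinarith [pow_pos hτ0 (i + 1), Nat.cast_nonneg (α := ℝ) i]
      have h3 : (c * M / τ) * (ρ / τ) ^ i = c * M * ρ ^ i / τ ^ (i + 1) := by
        rw [div_pow, div_mul_div_comm, ← pow_succ']
      rw [h1, h3]
      exact h2
    have hgeo : ∑ i ∈ Finset.range n, (ρ / τ) ^ i ≤ (1 - ρ / τ)⁻¹ := by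
      refine le_trans (Summable.sum_le_tsum (Finset.range n) (fun i _ => by positivity)
        (summable_geometric_of_lt_one hx0 hx1)) ?_
      rw [tsum_geometric_of_lt_one hx0 hx1]
    have hfinal : (c * M / τ) * (1 - ρ / τ)⁻¹ = c * M / (τ - ρ) := by
      have h4 : 1 - ρ / τ = (τ - ρ) / τ := by field_simp
      have hne : τ - ρ ≠ 0 := ne_of_gt (by linarith)
      rw [h4, inv_div, div_mul_div_comm, mul_comm τ (τ - ρ),
        mul_div_mul_right _ _ (ne_of_gt hτ0)]
    calc ∑ i ∈ Finset.range n, y (i + 1)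
        ≤ ∑ i ∈ Finset.range n, (c * M / τ) * (ρ / τ) ^ i :=
          Finset.sum_le_sum fun i _ => hterm i
      _ = (c * M / τ) * ∑ i ∈ Finset.range n, (ρ / τ) ^ i := by
          rw [Finset.mul_sum]
      _ ≤ (c * M / τ) * (1 - ρ / τ)⁻¹ :=
          mul_le_mul_of_nonneg_left hgeo (div_nonneg hcM hτ0.le)
      _ = c * M / (τ - ρ) := hfinal
  have hkey : ∀ j i : ℕ, 1 ≤ j →
      c ^ i / ((i)! * (j : ℝ) ^ i) * (M * ρ ^ (j - 1)) ^ i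
        = τ ^ (j * i) * (y j ^ i / (i)!) := by
    intro j i hj
    have hjR : (0 : ℝ) < j := by exact_mod_cast hj
    have hfact : (0 : ℝ) < (i)! := by exact_mod_cast Nat.factorial_pos i
    have hyj : y j = c * M * ρ ^ (j - 1) / (j * τ ^ j) := by rw [hydef]
    rw [hyj, div_pow, mul_pow (c * M) (ρ ^ (j - 1)), mul_pow (j : ℝ) (τ ^ j),
      ← pow_mul, mul_pow c M]
    rw [mul_comm (j : ℕ) i, pow_mul τ i]
    field_simp
    ring
  have hp : ∀ p : Nat.Partition n,
      ‖(n ! : ℂ) ^ 2 * 2 ^ (2 * n - 1) *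
        ∏ j ∈ p.parts.toFinset,
          (c : ℂ) ^ p.parts.count j /
              (((p.parts.count j)! : ℂ) * (j : ℂ) ^ p.parts.count j) *
            pip d f g j ^ p.parts.count j‖
      ≤ (n ! : ℝ) ^ 2 * 2 ^ (2 * n) *
          (τ ^ n * ∏ j ∈ p.parts.toFinset,
            y j ^ p.parts.count j / (p.parts.count j)!) := by
    intro p
    rw [norm_mul, norm_mul, norm_pow, norm_pow, Complex.norm_natCast]
    have h2 : ‖(2 : ℂ)‖ = 2 := by
      simpa using Complex.norm_natCast 2
    rw [h2]
    rw [norm_prod]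
    have hfac : ∀ j ∈ p.parts.toFinset,
        ‖(c : ℂ) ^ p.parts.count j /
            (((p.parts.count j)! : ℂ) * (j : ℂ) ^ p.parts.count j) *
          pip d f g j ^ p.parts.count j‖
        ≤ τ ^ (j * p.parts.count j) *
            (y j ^ p.parts.count j / (p.parts.count j)!) := by
      intro j hj
      have hj1 : 1 ≤ j := p.parts_pos (Multiset.mem_toFinset.mp hj)
      have hnorm : ‖(c : ℂ) ^ p.parts.count j /
            (((p.parts.count j)! : ℂ) * (j : ℂ) ^ p.parts.count j) *
          pip d f g j ^ p.parts.count j‖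
          = c ^ p.parts.count j / ((p.parts.count j)! * (j : ℝ) ^ p.parts.count j) *
              ‖pip d f g j‖ ^ p.parts.count j := by
        rw [norm_mul, norm_div, norm_pow, norm_pow, norm_mul, norm_pow,
          Complex.norm_natCast, Complex.norm_natCast]
        rw [Complex.norm_real, Real.norm_eq_abs, abs_of_pos hc]
      rw [hnorm]
      have hpow : ‖pip d f g j‖ ^ p.parts.count j
          ≤ (M * ρ ^ (j - 1)) ^ p.parts.count j :=
        pow_le_pow_left₀ (norm_nonneg _) (hpip j hj1) _
      have hnum : 0 ≤ c ^ p.parts.count j /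
          ((p.parts.count j)! * (j : ℝ) ^ p.parts.count j) := by
        have : (0:ℝ) < j := by exact_mod_cast hj1
        positivity
      calc c ^ p.parts.count j / ((p.parts.count j)! * (j : ℝ) ^ p.parts.count j) *
            ‖pip d f g j‖ ^ p.parts.count j
          ≤ c ^ p.parts.count j / ((p.parts.count j)! * (j : ℝ) ^ p.parts.count j) *
            (M * ρ ^ (j - 1)) ^ p.parts.count j :=
            mul_le_mul_of_nonneg_left hpow hnum
        _ = τ ^ (j * p.parts.count j) *
            (y j ^ p.parts.count j / (p.parts.count j)!) := hkey j _ hj1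
    have hprod_le := Finset.prod_le_prod
      (s := p.parts.toFinset)
      (f := fun j => ‖(c : ℂ) ^ p.parts.count j /
            (((p.parts.count j)! : ℂ) * (j : ℂ) ^ p.parts.count j) *
          pip d f g j ^ p.parts.count j‖)
      (g := fun j => τ ^ (j * p.parts.count j) *
            (y j ^ p.parts.count j / (p.parts.count j)!))
      (fun j _ => norm_nonneg _) hfac
    have hsplit : ∏ j ∈ p.parts.toFinset, τ ^ (j * p.parts.count j) *
            (y j ^ p.parts.count j / (p.parts.count j)!)
        = τ ^ n * ∏ j ∈ p.parts.toFinset,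
            y j ^ p.parts.count j / (p.parts.count j)! := by
      rw [Finset.prod_mul_distrib]
      congr 1
      rw [Finset.prod_pow_eq_pow_sum]
      congr 1
      exact partition_sum_counts p
    have h2pow : (2 : ℝ) ^ (2 * n - 1) ≤ 2 ^ (2 * n) :=
      pow_le_pow_right₀ one_le_two (Nat.sub_le _ _)
    rw [← hsplit]
    apply mul_le_mul
    · exact mul_le_mul_of_nonneg_left h2pow (by positivity)
    · exact hprod_le
    · exact Finset.prod_nonneg fun j _ => norm_nonneg _
    · positivity
  have hsum := norm_sum_le (Finset.univ : Finset (Nat.Partition n))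
    (fun p : Nat.Partition n => (n ! : ℂ) ^ 2 * 2 ^ (2 * n - 1) *
      ∏ j ∈ p.parts.toFinset,
        (c : ℂ) ^ p.parts.count j /
            (((p.parts.count j)! : ℂ) * (j : ℂ) ^ p.parts.count j) *
          pip d f g j ^ p.parts.count j)
  have hpartsum := partition_prod_le n y hy0
  have hprodnn : (0:ℝ) ≤ ∑ p : Nat.Partition n, ∏ j ∈ p.parts.toFinset,
      y j ^ p.parts.count j / (p.parts.count j)! :=
    Finset.sum_nonneg fun p _ => Finset.prod_nonneg fun j _ =>
      div_nonneg (pow_nonneg (hy0 j) _) (Nat.cast_nonneg _)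
  calc ‖Sker c d f g n‖
      ≤ ∑ p : Nat.Partition n, ‖(n ! : ℂ) ^ 2 * 2 ^ (2 * n - 1) *
          ∏ j ∈ p.parts.toFinset,
            (c : ℂ) ^ p.parts.count j /
                (((p.parts.count j)! : ℂ) * (j : ℂ) ^ p.parts.count j) *
              pip d f g j ^ p.parts.count j‖ := hsum
    _ ≤ ∑ p : Nat.Partition n, (n ! : ℝ) ^ 2 * 2 ^ (2 * n) *
          (τ ^ n * ∏ j ∈ p.parts.toFinset,
            y j ^ p.parts.count j / (p.parts.count j)!) :=
        Finset.sum_le_sum fun p _ => hp p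
    _ = (n ! : ℝ) ^ 2 * 2 ^ (2 * n) * τ ^ n *
          ∑ p : Nat.Partition n, ∏ j ∈ p.parts.toFinset,
            y j ^ p.parts.count j / (p.parts.count j)! := by
        rw [Finset.mul_sum]
        exact Finset.sum_congr rfl fun p _ => by ring
    _ ≤ (n ! : ℝ) ^ 2 * 2 ^ (2 * n) * τ ^ n *
          Real.exp (∑ i ∈ Finset.range n, y (i + 1)) :=
        mul_le_mul_of_nonneg_left hpartsum (by positivity)
    _ ≤ (n ! : ℝ) ^ 2 * 2 ^ (2 * n) * τ ^ n * Real.exp (c * M / (τ - ρ)) :=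
        mul_le_mul_of_nonneg_left (Real.exp_le_exp.mpr hsumy) (by positivity)
    _ = (n ! : ℝ) ^ 2 * (Real.exp (c * M / (τ - ρ)) * (4 * τ) ^ n) := by
        rw [mul_pow, pow_mul]
        norm_num
        ring

lemma sker_bound (d : ℕ) (c : ℝ) (hc : 0 < c) (f g : Dom d → ℂ)
    (hf : MemA d f) (hg : MemA d g)
    (hf' : eLpNorm f ⊤ (volume : Measure (Dom d)) < 1 / 2)
    (hg' : eLpNorm g ⊤ (volume : Measure (Dom d)) < 1 / 2) :
    ∃ A q : ℝ, 0 < q ∧ q < 1 ∧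
      ∀ n : ℕ, ‖Sker c d f g n‖ ≤ (n ! : ℝ) ^ 2 * (A * q ^ n) := by
  classical
  obtain ⟨a, hadef⟩ : ∃ a : ℝ, a = (eLpNorm f ⊤ (volume : Measure (Dom d))).toReal :=
    ⟨_, rfl⟩
  obtain ⟨b, hbdef⟩ : ∃ b : ℝ, b = (eLpNorm g ⊤ (volume : Measure (Dom d))).toReal :=
    ⟨_, rfl⟩
  have hfne : eLpNorm f ⊤ (volume : Measure (Dom d)) ≠ ⊤ :=
    (lt_of_lt_of_le hf' le_top).ne
  have hgne : eLpNorm g ⊤ (volume : Measure (Dom d)) ≠ ⊤ :=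
    (lt_of_lt_of_le hg' le_top).ne
  have hahalf : a < 1 / 2 := by
    have := (ENNReal.toReal_lt_toReal hfne (by norm_num : (1/2 : ℝ≥0∞) ≠ ⊤)).mpr hf'
    rw [← hadef] at this
    simpa [ENNReal.toReal_div] using this
  have hbhalf : b < 1 / 2 := by
    have := (ENNReal.toReal_lt_toReal hgne (by norm_num : (1/2 : ℝ≥0∞) ≠ ⊤)).mpr hg'
    rw [← hbdef] at this
    simpa [ENNReal.toReal_div] using this
  have ha0 : 0 ≤ a := hadef ▸ ENNReal.toReal_nonneg
  have hb0 : 0 ≤ b := hbdef ▸ ENNReal.toReal_nonneg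
  have hfa : ∀ᵐ x : Dom d ∂(volume : Measure (Dom d)), ‖f x‖ ≤ a := by
    have h := MeasureTheory.ae_le_eLpNormEssSup (f := f) (μ := (volume : Measure (Dom d)))
    filter_upwards [h] with x hx
    have hx2 : (‖f x‖₊ : ℝ≥0∞) ≤ eLpNorm f ⊤ (volume : Measure (Dom d)) := by
      rwa [MeasureTheory.eLpNorm_exponent_top]
    have h2 := ENNReal.toReal_mono hfne hx2
    rw [← hadef] at h2
    simpa using h2
  have hgb : ∀ᵐ x : Dom d ∂(volume : Measure (Dom d)), ‖g x‖ ≤ b := by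
    have h := MeasureTheory.ae_le_eLpNormEssSup (f := g) (μ := (volume : Measure (Dom d)))
    filter_upwards [h] with x hx
    have hx2 : (‖g x‖₊ : ℝ≥0∞) ≤ eLpNorm g ⊤ (volume : Measure (Dom d)) := by
      rwa [MeasureTheory.eLpNorm_exponent_top]
    have h2 := ENNReal.toReal_mono hgne hx2
    rw [← hbdef] at h2
    simpa using h2
  have hint : MeasureTheory.Integrable (fun x : Dom d => ‖f x‖ * ‖g x‖)
      (volume : Measure (Dom d)) := by
    have h2f : MeasureTheory.MemLp (fun x : Dom d => ‖f x‖) 2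
        (volume : Measure (Dom d)) := hf.1.norm
    have h2g : MeasureTheory.MemLp (fun x : Dom d => ‖g x‖) 2
        (volume : Measure (Dom d)) := hg.1.norm
    have hpqr : (1 : ℝ≥0∞) / 1 = 1 / 2 + 1 / 2 := by
      rw [ENNReal.add_halves]; simp
    have hmul := h2g.smul (r := 1) h2f
    have hfun : ((fun x : Dom d => ‖f x‖) • fun x : Dom d => ‖g x‖)
        = fun x : Dom d => ‖f x‖ * ‖g x‖ := by
      funext x; simp [smul_eq_mul]
    rw [hfun] at hmul
    exact (MeasureTheory.memLp_one_iff_integrable).mp hmul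
  obtain ⟨M, hMdef⟩ : ∃ M : ℝ, M = ∫ x : Dom d, ‖f x‖ * ‖g x‖ := ⟨_, rfl⟩
  have hM0 : 0 ≤ M := hMdef ▸ MeasureTheory.integral_nonneg fun x => by positivity
  obtain ⟨s0, hs0def⟩ : ∃ s0 : ℝ, s0 = max (max a b) (1 / 4) := ⟨_, rfl⟩
  have hs00 : 0 < s0 := by
    rw [hs0def]; exact lt_of_lt_of_le (by norm_num) (le_max_right _ _)
  have hs0h : s0 < 1 / 2 := by
    rw [hs0def]; exact max_lt (max_lt hahalf hbhalf) (by norm_num)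
  have has0 : a ≤ s0 := by rw [hs0def]; exact le_trans (le_max_left a b) (le_max_left _ _)
  have hbs0 : b ≤ s0 := by rw [hs0def]; exact le_trans (le_max_right a b) (le_max_left _ _)
  obtain ⟨ρ, hρdef⟩ : ∃ ρ : ℝ, ρ = s0 ^ 2 := ⟨_, rfl⟩
  have hρ0 : 0 < ρ := by rw [hρdef]; positivity
  have hρ4 : ρ < 1 / 4 := by rw [hρdef]; nlinarith
  have hfa' : ∀ᵐ x : Dom d ∂(volume : Measure (Dom d)), ‖f x‖ ≤ s0 := by
    filter_upwards [hfa] with x hx; linarith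
  have hgb' : ∀ᵐ x : Dom d ∂(volume : Measure (Dom d)), ‖g x‖ ≤ s0 := by
    filter_upwards [hgb] with x hx; linarith
  have hpip : ∀ j : ℕ, 1 ≤ j → ‖pip d f g j‖ ≤ M * ρ ^ (j - 1) := by
    intro j hj
    have h := pip_bound d f g hfa' hgb' hint hs00.le hs00.le hj
    rw [← hMdef] at h
    calc ‖pip d f g j‖ ≤ (s0 * s0) ^ (j - 1) * M := h
      _ = M * ρ ^ (j - 1) := by rw [hρdef, sq]; ring
  obtain ⟨τ, hτdef⟩ : ∃ τ : ℝ, τ = (ρ + 1 / 4) / 2 := ⟨_, rfl⟩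
  have hτρ : ρ < τ := by rw [hτdef]; linarith
  have hτ4 : τ < 1 / 4 := by rw [hτdef]; linarith
  have hτ0 : 0 < τ := lt_trans hρ0 hτρ
  refine ⟨Real.exp (c * M / (τ - ρ)), 4 * τ, by linarith, by linarith, ?_⟩
  intro n
  exact sker_bound_aux d c hc f g hM0 hρ0 hτρ hpip n


/-- Lemma 2 of the paper: for `∥f∥_∞, ∥g∥_∞ < 1/2`, the series
`G(t) = Σ_m t^m S_m(f,g)/(m!)²` converges absolutely on `[0,1]`, is `n` times
differentiable there, its `n`-th derivative is given by termwise differentiation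
`G⁽ⁿ⁾(t) = Σ_{m≥n} t^{m−n} S_m(f,g)/(m!(m−n)!)`, and `S_n(f,g) = n!·G⁽ⁿ⁾(0)`. -/
theorem statement4 (d : ℕ) (hd : 1 ≤ d) (c : ℝ) (hc : 0 < c)
    (f g : Dom d → ℂ) (hf : MemA d f) (hg : MemA d g)
    (hf' : eLpNorm f ⊤ (volume : Measure (Dom d)) < 1 / 2)
    (hg' : eLpNorm g ⊤ (volume : Measure (Dom d)) < 1 / 2)
    (G : ℝ → ℂ)
    (hG : G = fun t : ℝ => ∑' m : ℕ, (t : ℂ) ^ m * Sker c d f g m / (m ! : ℂ) ^ 2) :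
    (∀ t ∈ Set.Icc (0 : ℝ) 1,
      Summable (fun m : ℕ => ‖(t : ℂ) ^ m * Sker c d f g m / (m ! : ℂ) ^ 2‖)) ∧
    (∀ n : ℕ, 1 ≤ n →
      DifferentiableOn ℝ (iteratedDerivWithin (n - 1) G (Set.Icc (0 : ℝ) 1))
        (Set.Icc (0 : ℝ) 1)) ∧
    (∀ n : ℕ, 1 ≤ n → ∀ t ∈ Set.Icc (0 : ℝ) 1,
      iteratedDerivWithin n G (Set.Icc (0 : ℝ) 1) t =
        ∑' m : ℕ, (t : ℂ) ^ m * Sker c d f g (m + n) / (((m + n)! : ℂ) * (m ! : ℂ))) ∧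
    (∀ n : ℕ, 1 ≤ n →
      Sker c d f g n = (n ! : ℂ) * iteratedDerivWithin n G (Set.Icc (0 : ℝ) 1) 0) := by
  classical
  obtain ⟨A, q, hq0, hq1, hSb⟩ := sker_bound d c hc f g hf hg hf' hg'
  have hA0 : 0 ≤ A := by
    have h0 := hSb 0
    simp only [Nat.factorial_zero, Nat.cast_one, one_pow, pow_zero, mul_one, one_mul] at h0
    exact le_trans (norm_nonneg _) h0
  -- the coefficients of the derivatives
  obtain ⟨B, hBdef⟩ : ∃ B : ℕ → ℕ → ℂ,
      B = fun n m => Sker c d f g (m + n) / (((m + n)! : ℂ) * (m ! : ℂ)) := ⟨_, rfl⟩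
  have hBshift : ∀ n m : ℕ, B (n + 1) m = ((m : ℂ) + 1) * B n (m + 1) := by
    intro n m
    rw [hBdef]
    simp only
    have e1 : m + (n + 1) = (m + 1) + n := by ring
    rw [e1]
    have e2 : ((m + 1)! : ℂ) = ((m : ℂ) + 1) * (m ! : ℂ) := by
      rw [Nat.factorial_succ]; push_cast; ring
    rw [e2]
    have hm1 : ((m : ℂ) + 1) ≠ 0 := by
      have h5 : ((m : ℂ) + 1) = ((m + 1 : ℕ) : ℂ) := by push_cast; ring
      rw [h5]
      exact Nat.cast_ne_zero.mpr (Nat.succ_ne_zero m)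
    have hfacne : (((m + 1 + n)! : ℂ)) ≠ 0 :=
      Nat.cast_ne_zero.mpr (Nat.factorial_ne_zero _)
    have hmfacne : ((m ! : ℂ)) ≠ 0 :=
      Nat.cast_ne_zero.mpr (Nat.factorial_ne_zero _)
    field_simp
  -- geometric bounds on each row of coefficients
  have hbnd : ∀ n : ℕ, ∃ A' q' : ℝ, 0 < q' ∧ q' < 1 ∧
      ∀ m : ℕ, ‖B n m‖ ≤ A' * q' ^ m := by
    intro n
    induction n with
    | zero =>
      refine ⟨A, q, hq0, hq1, fun m => ?_⟩
      have h := hSb m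
      rw [hBdef]
      simp only [add_zero]
      simp only [norm_div, norm_mul, Complex.norm_natCast]
      rw [div_le_iff₀ (by positivity)]
      calc ‖Sker c d f g m‖ ≤ (m ! : ℝ) ^ 2 * (A * q ^ m) := h
        _ = A * q ^ m * ((m ! : ℝ) * (m ! : ℝ)) := by ring
    | succ n ih =>
      obtain ⟨A', q', h1, h2, h3⟩ := ih
      obtain ⟨A'', q'', g1, g2, g3⟩ := shift_coef_bound h1 h2 h3
      refine ⟨A'', q'', g1, g2, fun m => ?_⟩
      rw [hBshift n m]
      exact g3 m
  -- the family of termwise-differentiated series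
  obtain ⟨H, hHdef⟩ : ∃ H : ℕ → ℝ → ℂ,
      H = fun (n : ℕ) (t : ℝ) => ∑' m : ℕ, (t : ℂ) ^ m * B n m := ⟨_, rfl⟩
  have hder : ∀ n : ℕ, ∀ x : ℝ, |x| ≤ 1 → HasDerivAt (H n) (H (n + 1) x) x := by
    intro n x hx
    obtain ⟨A', q', h1, h2, h3⟩ := hbnd n
    have h := hasDerivAt_tsum_coef h1 h2 h3 hx
    rw [hHdef]
    simp only
    convert h using 1
    apply tsum_congr
    intro m
    rw [hBshift n m]
  have hIccabs : ∀ t : ℝ, t ∈ Set.Icc (0 : ℝ) 1 → |t| ≤ 1 := by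
    intro t ht
    rw [abs_le]
    exact ⟨by linarith [ht.1], ht.2⟩
  have hUD : UniqueDiffOn ℝ (Set.Icc (0 : ℝ) 1) := uniqueDiffOn_Icc zero_lt_one
  -- the key identity
  have key : ∀ n : ℕ, ∀ t ∈ Set.Icc (0 : ℝ) 1,
      iteratedDerivWithin n G (Set.Icc (0 : ℝ) 1) t = H n t := by
    intro n
    induction n with
    | zero =>
      intro t ht
      rw [iteratedDerivWithin_zero, hG, hHdef]
      simp only
      apply tsum_congr
      intro m
      rw [hBdef]
      simp only [add_zero]
      rw [mul_div_assoc, sq]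
    | succ n ih =>
      intro t ht
      rw [iteratedDerivWithin_succ]
      rw [derivWithin_congr ih (ih t ht)]
      exact ((hder n t (hIccabs t ht)).hasDerivWithinAt).derivWithin (hUD t ht)
  refine ⟨?_, ?_, ?_, ?_⟩
  · -- summability
    intro t ht
    have hb0 := (hbnd 0).choose_spec
    obtain ⟨A', q', h1, h2, h3⟩ := hbnd 0
    have hsum : Summable (fun m : ℕ => ‖((t : ℂ)) ^ m * B 0 m‖) := by
      apply summable_geom_bound h1.le h3
      rw [Complex.norm_real, Real.norm_eq_abs]
      calc |t| * q' ≤ 1 * q' := by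
            exact mul_le_mul_of_nonneg_right (hIccabs t ht) h1.le
        _ < 1 := by rwa [one_mul]
    convert hsum using 2 with m
    rw [hBdef]
    simp only [add_zero]
    rw [mul_div_assoc, sq]
  · -- differentiability
    intro n hn
    have hdiff : DifferentiableOn ℝ (H (n - 1)) (Set.Icc (0 : ℝ) 1) := by
      intro t ht
      exact ((hder (n - 1) t (hIccabs t ht)).differentiableAt).differentiableWithinAt
    exact hdiff.congr (key (n - 1))
  · -- the derivative formula
    intro n hn t ht
    rw [key n t ht, hHdef]
    simp only
    apply tsum_congr
    intro m
    rw [hBdef]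
    simp only
    rw [mul_div_assoc]
  · -- the value at zero
    intro n hn
    have h0 : (0 : ℝ) ∈ Set.Icc (0 : ℝ) 1 := by constructor <;> norm_num
    rw [key n 0 h0, hHdef]
    simp only
    have htsum : (∑' m : ℕ, ((0 : ℝ) : ℂ) ^ m * B n m) = B n 0 := by
      rw [tsum_eq_single 0]
      · simp
      · intro m hm
        rw [Complex.ofReal_zero, zero_pow hm, zero_mul]
    rw [htsum, hBdef]
    simp only [zero_add, Nat.factorial_zero, Nat.cast_one, mul_one]
    rw [mul_div_cancel₀]
    exact Nat.cast_ne_zero.mpr (Nat.factorial_ne_zero n)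
end
end

section
/- Let α: ℝ^d → ℝ be a Borel measurable function, let T₁ be a *-endomorphism of 𝒜, and define T: 𝒜 → 𝒜 by (Tf)(x) := e^{iα(x)} (T₁f)(x). Then ⟨(Tf)^k, (Tg)^k⟩ = ⟨f^k, g^k⟩ for all integers k ≥ 1 and all f,g ∈ 𝒜; consequently S_n(Tf,Tg) = S_n(f,g) for all n ≥ 0 and f,g ∈ 𝒜, and K(Tf,Tg) = K(f,g) whenever ∥f∥_∞ < 1/2 and ∥g∥_∞ < 1/2. (This says that the quadratic second quantization Γ₂(T) is an isometry of the quadratic Fock space.) -/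
open MeasureTheory Complex Finset
open scoped Nat ENNReal

noncomputable section

/-- A `*`-endomorphism of the Hilbert algebra `𝒜 = L²(ℝ^d) ∩ L^∞(ℝ^d)`: a linear map
of `𝒜` into itself (well defined on a.e.-equivalence classes) preserving the `L²` inner
product, pointwise multiplication and conjugation. -/
structure IsStarEndo (d : ℕ) (T₁ : (Dom d → ℂ) → (Dom d → ℂ)) : Prop where
  mem : ∀ f, MemA d f → MemA d (T₁ f)
  ae_eq : ∀ f g, MemA d f → MemA d g → f =ᵐ[(volume : Measure (Dom d))] g →
    T₁ f =ᵐ[(volume : Measure (Dom d))] T₁ g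
  add : ∀ f g, MemA d f → MemA d g →
    T₁ (f + g) =ᵐ[(volume : Measure (Dom d))] T₁ f + T₁ g
  smul : ∀ (a : ℂ) (f : Dom d → ℂ), MemA d f →
    T₁ (a • f) =ᵐ[(volume : Measure (Dom d))] a • T₁ f
  inner : ∀ f g, MemA d f → MemA d g →
    ∫ x : Dom d, (starRingEnd ℂ) (T₁ f x) * T₁ g x =
      ∫ x : Dom d, (starRingEnd ℂ) (f x) * g x
  mul : ∀ f g, MemA d f → MemA d g →
    T₁ (f * g) =ᵐ[(volume : Measure (Dom d))] T₁ f * T₁ g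
  star : ∀ f, MemA d f →
    T₁ (fun x => (starRingEnd ℂ) (f x)) =ᵐ[(volume : Measure (Dom d))]
      fun x => (starRingEnd ℂ) (T₁ f x)

variable {d : ℕ}

lemma memA_conj {f : Dom d → ℂ} (hf : MemA d f) :
    MemA d (fun x => (starRingEnd ℂ) (f x)) := by
  have key : ∀ p : ℝ≥0∞, MemLp f p (volume : Measure (Dom d)) →
      MemLp (fun x => (starRingEnd ℂ) (f x)) p (volume : Measure (Dom d)) := by
    intro p h
    have := Complex.conjLIE.lipschitz.comp_memLp (by simp) h
    exact this
  exact ⟨key 2 hf.1, key ⊤ hf.2⟩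

lemma memA_mul {f g : Dom d → ℂ} (hf : MemA d f) (hg : MemA d g) : MemA d (f * g) := by
  have hfg : f * g = f • g := by funext x; simp [smul_eq_mul]
  exact ⟨hfg ▸ MemLp.smul hg.1 hf.2, hfg ▸ MemLp.smul hg.2 hf.2⟩

lemma memA_pow {f : Dom d → ℂ} (hf : MemA d f) : ∀ k : ℕ, MemA d (f ^ (k + 1)) := by
  intro k
  induction k with
  | zero => simpa using hf
  | succ m ih =>
    have : f ^ (m + 2) = f ^ (m + 1) * f := by rw [pow_succ]
    rw [this]; exact memA_mul ih hf


variable {T₁ : (Dom d → ℂ) → (Dom d → ℂ)}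

lemma T1_pow (hT₁ : IsStarEndo d T₁) {f : Dom d → ℂ} (hf : MemA d f) :
    ∀ k : ℕ, T₁ (f ^ (k + 1)) =ᵐ[(volume : Measure (Dom d))] (T₁ f) ^ (k + 1) := by
  intro k
  induction k with
  | zero => simpa using EventuallyEq.rfl
  | succ m ih =>
    have h1 : f ^ (m + 2) = f ^ (m + 1) * f := by rw [pow_succ]
    have h2 := hT₁.mul (f ^ (m + 1)) f (memA_pow hf m) hf
    rw [h1]
    refine h2.trans ?_
    filter_upwards [ih] with x hx
    simp only [Pi.mul_apply, Pi.pow_apply] at hx ⊢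
    rw [hx]; ring

lemma inner_pow (hT₁ : IsStarEndo d T₁) {f g : Dom d → ℂ} (hf : MemA d f) (hg : MemA d g)
    (k : ℕ) :
    ∫ x : Dom d, (starRingEnd ℂ) (T₁ f x) ^ (k + 1) * (T₁ g x) ^ (k + 1) =
      pip d f g (k + 1) := by
  have h1 : (fun x : Dom d => (starRingEnd ℂ) (T₁ f x) ^ (k + 1) * (T₁ g x) ^ (k + 1))
      =ᵐ[(volume : Measure (Dom d))]
      fun x => (starRingEnd ℂ) (T₁ (f ^ (k + 1)) x) * (T₁ (g ^ (k + 1)) x) := by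
    filter_upwards [T1_pow hT₁ hf k, T1_pow hT₁ hg k] with x hx hy
    rw [hx, hy]
    simp [map_pow]
  rw [integral_congr_ae h1, hT₁.inner _ _ (memA_pow hf k) (memA_pow hg k)]
  unfold pip
  refine integral_congr_ae (Filter.Eventually.of_forall fun x => ?_)
  simp [map_pow]

lemma memℒ2_int_sq {h : Dom d → ℂ} (hh : MemLp h 2 (volume : Measure (Dom d))) :
    Integrable (fun x => ‖h x‖ ^ (2 : ℕ)) (volume : Measure (Dom d)) := by
  have h1 := hh.integrable_norm_rpow (by norm_num) (by norm_num)
  have h2 : ∀ x : Dom d, ‖h x‖ ^ ((2 : ℝ≥0∞).toReal) = ‖h x‖ ^ (2 : ℕ) := by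
    intro x
    rw [show ((2 : ℝ≥0∞).toReal) = ((2 : ℕ) : ℝ) by norm_num, Real.rpow_natCast]
  exact h1.congr (Filter.Eventually.of_forall h2)

lemma int_norm_pow {h : Dom d → ℂ} (hh : MemA d h) (m : ℕ) :
    Integrable (fun x => ‖h x‖ ^ (2 * (m + 1))) (volume : Measure (Dom d)) := by
  have h1 := memℒ2_int_sq (memA_pow hh m).1
  refine h1.congr (Filter.Eventually.of_forall fun x => ?_)
  simp only [Pi.pow_apply, norm_pow]
  ring

lemma lint_sq_lt_top {h : Dom d → ℂ} (hh : MemLp h 2 (volume : Measure (Dom d))) :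
    ∫⁻ x, (‖h x‖₊ : ℝ≥0∞) ^ (2 : ℕ) ∂(volume : Measure (Dom d)) < ⊤ := by
  have h1 := hh.2
  rw [eLpNorm_eq_lintegral_rpow_enorm_toReal (by norm_num) (by norm_num)] at h1
  have h2 : (∫⁻ x, (‖h x‖₊ : ℝ≥0∞) ^ ((2 : ℝ≥0∞).toReal) ∂(volume : Measure (Dom d))) < ⊤ := by
    by_contra hcon
    rw [not_lt, top_le_iff] at hcon
    rw [show (∫⁻ x, ‖h x‖ₑ ^ ((2 : ℝ≥0∞).toReal) ∂(volume : Measure (Dom d))) = ⊤ from hcon] at h1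
    simp [ENNReal.top_rpow_of_pos, ENNReal.toReal_ofNat] at h1
  refine lt_of_eq_of_lt ?_ h2
  refine lintegral_congr fun x => ?_
  rw [show ((2 : ℝ≥0∞).toReal) = ((2 : ℕ) : ℝ) by norm_num, ENNReal.rpow_natCast]

lemma conj_mul_self (z : ℂ) : (starRingEnd ℂ) z * z = ((‖z‖ ^ 2 : ℝ) : ℂ) := by
  rw [mul_comm, Complex.mul_conj, Complex.normSq_eq_norm_sq]

lemma pow_identity (z : ℂ) (n : ℕ) :
    (starRingEnd ℂ) (((starRingEnd ℂ) z * z) ^ n) * ((starRingEnd ℂ) z * z) ^ n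
      = ((‖z‖ ^ (4 * n) : ℝ) : ℂ) := by
  rw [conj_mul_self]
  congr 1
  simp only [norm_pow, norm_mul, RCLike.norm_conj]
  ring

lemma lintegral_norm_pow_eq (hT₁ : IsStarEndo d T₁) {f : Dom d → ℂ} (hf : MemA d f) (k : ℕ) :
    (∫⁻ x, (‖T₁ f x‖₊ : ℝ≥0∞) ^ (4 * (k + 1)) ∂(volume : Measure (Dom d)))
      = ∫⁻ x, (‖f x‖₊ : ℝ≥0∞) ^ (4 * (k + 1)) ∂(volume : Measure (Dom d)) := by
  set F := T₁ f with hFdef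
  have hFmem : MemA d F := hT₁.mem f hf
  set v : Dom d → ℂ := (fun x => (starRingEnd ℂ) (f x)) * f with hvdef
  have hv : MemA d v := memA_mul (memA_conj hf) hf
  have hW : T₁ v =ᵐ[(volume : Measure (Dom d))] fun x => (starRingEnd ℂ) (F x) * F x := by
    refine (hT₁.mul _ f (memA_conj hf) hf).trans ?_
    filter_upwards [hT₁.star f hf] with x hx
    simp only [Pi.mul_apply]
    rw [hx]
  have hu : MemA d (v ^ (k + 1)) := memA_pow hv k
  have hinn := hT₁.inner _ _ hu hu
  have hL : (fun x : Dom d => (starRingEnd ℂ) (T₁ (v ^ (k + 1)) x) * T₁ (v ^ (k + 1)) x)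
      =ᵐ[(volume : Measure (Dom d))] fun x => ((‖F x‖ ^ (4 * (k + 1)) : ℝ) : ℂ) := by
    filter_upwards [T1_pow hT₁ hv k, hW] with x h1 h2
    rw [h1]
    simp only [Pi.pow_apply]
    rw [h2, pow_identity]
  have hRr : (fun x : Dom d => (starRingEnd ℂ) ((v ^ (k + 1)) x) * (v ^ (k + 1)) x)
      = fun x => ((‖f x‖ ^ (4 * (k + 1)) : ℝ) : ℂ) := by
    funext x
    simp only [Pi.pow_apply, hvdef, Pi.mul_apply]
    rw [pow_identity]
  rw [integral_congr_ae hL, hRr] at hinn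
  have e1 : (∫ x : Dom d, ((‖F x‖ ^ (4 * (k + 1)) : ℝ) : ℂ))
      = ((∫ x : Dom d, ‖F x‖ ^ (4 * (k + 1)) : ℝ) : ℂ) := integral_ofReal
  have e2 : (∫ x : Dom d, ((‖f x‖ ^ (4 * (k + 1)) : ℝ) : ℂ))
      = ((∫ x : Dom d, ‖f x‖ ^ (4 * (k + 1)) : ℝ) : ℂ) := integral_ofReal
  rw [e1, e2] at hinn
  have hreal : (∫ x, ‖F x‖ ^ (4 * (k + 1)) ∂(volume : Measure (Dom d)))
      = ∫ x, ‖f x‖ ^ (4 * (k + 1)) ∂(volume : Measure (Dom d)) := by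
    exact_mod_cast hinn
  have hiF : Integrable (fun x => ‖F x‖ ^ (4 * (k + 1))) (volume : Measure (Dom d)) := by
    have := int_norm_pow hFmem (2 * k + 1)
    have he : 2 * (2 * k + 1 + 1) = 4 * (k + 1) := by ring
    rwa [he] at this
  have hif : Integrable (fun x => ‖f x‖ ^ (4 * (k + 1))) (volume : Measure (Dom d)) := by
    have := int_norm_pow hf (2 * k + 1)
    have he : 2 * (2 * k + 1 + 1) = 4 * (k + 1) := by ring
    rwa [he] at this
  have hcv : ∀ (h : Dom d → ℂ), (∫⁻ x, ENNReal.ofReal (‖h x‖ ^ (4 * (k + 1)))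
        ∂(volume : Measure (Dom d)))
      = ∫⁻ x, (‖h x‖₊ : ℝ≥0∞) ^ (4 * (k + 1)) ∂(volume : Measure (Dom d)) := by
    intro h
    refine lintegral_congr fun x => ?_
    rw [ENNReal.ofReal_pow (norm_nonneg _), ofReal_norm, enorm_eq_nnnorm]
  rw [← hcv F, ← hcv f,
    ← ofReal_integral_eq_lintegral_ofReal hiF
        (Filter.Eventually.of_forall fun x => pow_nonneg (norm_nonneg _) _),
    ← ofReal_integral_eq_lintegral_ofReal hif
        (Filter.Eventually.of_forall fun x => pow_nonneg (norm_nonneg _) _),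
    hreal]

lemma ae_lt_of_starEndo (hT₁ : IsStarEndo d T₁) {f : Dom d → ℂ} (hf : MemA d f)
    {s : ℝ≥0∞} (hs0 : s ≠ 0) (hstop : s ≠ ⊤)
    (hs : eLpNorm f ⊤ (volume : Measure (Dom d)) < s) :
    ∀ᵐ x ∂(volume : Measure (Dom d)), (‖T₁ f x‖₊ : ℝ≥0∞) < s := by
  set μ := (volume : Measure (Dom d)) with hμ
  set F := T₁ f with hFdef
  have hFmem : MemA d F := hT₁.mem f hf
  set R := eLpNorm f ⊤ μ with hRdef
  have hRtop : R < ⊤ := lt_of_lt_of_le hs le_top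
  have hbf : ∀ᵐ x ∂μ, (‖f x‖₊ : ℝ≥0∞) ≤ R := by
    rw [hRdef, eLpNorm_exponent_top]
    exact ae_le_eLpNormEssSup
  have hC₂ : (∫⁻ x, (‖f x‖₊ : ℝ≥0∞) ^ (2 : ℕ) ∂μ) < ⊤ := lint_sq_lt_top hf.1
  set C₄ := ∫⁻ x, (‖f x‖₊ : ℝ≥0∞) ^ (4 : ℕ) ∂μ with hC₄def
  have hC₄ : C₄ < ⊤ := by
    have hle : C₄ ≤ R ^ 2 * ∫⁻ x, (‖f x‖₊ : ℝ≥0∞) ^ (2 : ℕ) ∂μ := by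
      rw [hC₄def, ← lintegral_const_mul' _ _ (ENNReal.pow_ne_top hRtop.ne)]
      refine lintegral_mono_ae ?_
      filter_upwards [hbf] with x hx
      calc (‖f x‖₊ : ℝ≥0∞) ^ (4 : ℕ)
          = (‖f x‖₊ : ℝ≥0∞) ^ (2 : ℕ) * (‖f x‖₊ : ℝ≥0∞) ^ (2 : ℕ) := by ring
        _ ≤ R ^ 2 * (‖f x‖₊ : ℝ≥0∞) ^ (2 : ℕ) :=
            mul_le_mul' (pow_le_pow_left' hx 2) le_rfl
    exact lt_of_le_of_lt hle
      (ENNReal.mul_lt_top (ENNReal.pow_lt_top hRtop) hC₂)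
  have hmom : ∀ k : ℕ, (∫⁻ x, (‖f x‖₊ : ℝ≥0∞) ^ (4 * (k + 1)) ∂μ) ≤ R ^ (4 * k) * C₄ := by
    intro k
    rw [hC₄def, ← lintegral_const_mul' _ _ (ENNReal.pow_ne_top hRtop.ne)]
    refine lintegral_mono_ae ?_
    filter_upwards [hbf] with x hx
    calc (‖f x‖₊ : ℝ≥0∞) ^ (4 * (k + 1))
        = (‖f x‖₊ : ℝ≥0∞) ^ (4 * k) * (‖f x‖₊ : ℝ≥0∞) ^ (4 : ℕ) := by
          rw [show 4 * (k + 1) = 4 * k + 4 by ring, pow_add]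
      _ ≤ R ^ (4 * k) * (‖f x‖₊ : ℝ≥0∞) ^ (4 : ℕ) :=
          mul_le_mul' (pow_le_pow_left' hx _) le_rfl
  have hE : ∀ k : ℕ, μ {x | s ≤ (‖F x‖₊ : ℝ≥0∞)} ≤ ((R / s) ^ 4) ^ k * (C₄ / s ^ 4) := by
    intro k
    have hsub : {x | s ≤ (‖F x‖₊ : ℝ≥0∞)}
        ⊆ {x | s ^ (4 * (k + 1)) ≤ ((‖F x‖₊ : ℝ≥0∞)) ^ (4 * (k + 1))} := by
      intro x hx
      simp only [Set.mem_setOf_eq] at hx ⊢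
      exact pow_le_pow_left' hx _
    have hmar := mul_meas_ge_le_lintegral₀
      (hFmem.1.1.enorm.pow_const (4 * (k + 1))) (s ^ (4 * (k + 1)))
    have h1 : s ^ (4 * (k + 1)) * μ {x | s ≤ (‖F x‖₊ : ℝ≥0∞)} ≤ R ^ (4 * k) * C₄ := by
      refine le_trans (mul_le_mul' le_rfl (measure_mono hsub)) (le_trans hmar ?_)
      rw [hFdef]; refine (lintegral_norm_pow_eq hT₁ hf k).trans_le ?_
      exact hmom k
    have hsn0 : s ^ (4 * (k + 1)) ≠ 0 := pow_ne_zero _ hs0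
    have hsnt : s ^ (4 * (k + 1)) ≠ ⊤ := ENNReal.pow_ne_top hstop
    have h2 : μ {x | s ≤ (‖F x‖₊ : ℝ≥0∞)} ≤ (R ^ (4 * k) * C₄) / s ^ (4 * (k + 1)) := by
      rw [ENNReal.le_div_iff_mul_le (Or.inl hsn0) (Or.inl hsnt)]
      calc μ {x | s ≤ (‖F x‖₊ : ℝ≥0∞)} * s ^ (4 * (k + 1))
          = s ^ (4 * (k + 1)) * μ {x | s ≤ (‖F x‖₊ : ℝ≥0∞)} := mul_comm _ _
        _ ≤ _ := h1
    refine h2.trans (le_of_eq ?_)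
    have e1 : s ^ (4 * (k + 1)) = s ^ (4 * k) * s ^ (4 : ℕ) := by
      rw [show 4 * (k + 1) = 4 * k + 4 by ring, pow_add]
    calc (R ^ (4 * k) * C₄) / s ^ (4 * (k + 1))
        = R ^ (4 * k) * C₄ * ((s ^ (4 * k))⁻¹ * (s ^ (4 : ℕ))⁻¹) := by
          rw [div_eq_mul_inv, e1,
            ENNReal.mul_inv (Or.inl (pow_ne_zero _ hs0)) (Or.inl (ENNReal.pow_ne_top hstop))]
      _ = (R ^ (4 * k) * (s ^ (4 * k))⁻¹) * (C₄ * (s ^ (4 : ℕ))⁻¹) := by ring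
      _ = ((R / s) ^ 4) ^ k * (C₄ / s ^ 4) := by
          rw [← pow_mul, div_eq_mul_inv, div_eq_mul_inv, mul_pow, ENNReal.inv_pow]
  have hr1 : (R / s) ^ 4 < 1 := by
    have hds : R / s < 1 := by
      rw [ENNReal.div_lt_iff (Or.inl hs0) (Or.inl hstop), one_mul]
      exact hs
    exact pow_lt_one₀ zero_le hds (by norm_num)
  have hDnt : C₄ / s ^ 4 ≠ ⊤ :=
    (ENNReal.div_lt_top hC₄.ne (pow_ne_zero _ hs0)).ne
  have hzero : μ {x | s ≤ (‖F x‖₊ : ℝ≥0∞)} = 0 := by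
    refine ENNReal.eq_zero_of_le_mul_pow (ε := (C₄ / s ^ 4).toNNReal) hr1 fun k => ?_
    rw [ENNReal.coe_toNNReal hDnt, mul_comm]
    exact hE k
  have : ∀ᵐ x ∂μ, ¬ s ≤ (‖F x‖₊ : ℝ≥0∞) := by
    rw [ae_iff]
    simpa using hzero
  filter_upwards [this] with x hx
  exact not_le.mp hx

lemma integral_log_one_sub (w : Dom d → ℂ) (hw : Integrable w (volume : Measure (Dom d)))
    {ρ : ℝ≥0∞} (hρ0 : ρ ≠ 0) (hρt : ρ ≠ ⊤) (hρ1 : ρ < 1)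
    (hb : ∀ᵐ x ∂(volume : Measure (Dom d)), (‖w x‖₊ : ℝ≥0∞) ≤ ρ) :
    ∫ x, Complex.log (1 - w x) ∂(volume : Measure (Dom d))
      = -∑' n : ℕ, (∫ x, w x ^ n ∂(volume : Measure (Dom d))) / n := by
  set μ := (volume : Measure (Dom d)) with hμ
  set u : ℕ → Dom d → ℂ := fun n x => w x ^ n / n with hudef
  have husm : ∀ n, AEStronglyMeasurable (u n) μ := by
    intro n
    have hp : AEStronglyMeasurable (fun x => w x ^ n) μ := by
      induction n with
      | zero => simpa using aestronglyMeasurable_const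
      | succ m ih =>
        have := ih.mul hw.1
        refine this.congr (Filter.Eventually.of_forall fun x => ?_)
        simp only [Pi.mul_apply]
        rw [pow_succ]
    have h2 := hp.mul (aestronglyMeasurable_const (b := ((n : ℂ))⁻¹))
    refine h2.congr (Filter.Eventually.of_forall fun x => ?_)
    rw [hudef]
    simp only [Pi.mul_apply, div_eq_mul_inv]
  have hA : (∫⁻ x, (‖w x‖₊ : ℝ≥0∞) ∂μ) < ⊤ := hw.2
  have hbound : ∀ n, (∫⁻ x, (‖u n x‖₊ : ℝ≥0∞) ∂μ)
      ≤ (ρ⁻¹ * ∫⁻ x, (‖w x‖₊ : ℝ≥0∞) ∂μ) * ρ ^ n := by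
    intro n
    cases n with
    | zero =>
      have h0 : ∀ x : Dom d, u 0 x = 0 := by
        intro x; simp [hudef]
      simp [h0]
    | succ m =>
      have hp : ∀ᵐ x ∂μ, (‖u (m + 1) x‖₊ : ℝ≥0∞) ≤ ρ ^ m * (‖w x‖₊ : ℝ≥0∞) := by
        filter_upwards [hb] with x hx
        have h1 : (‖u (m + 1) x‖₊ : ℝ≥0∞) ≤ (‖w x‖₊ : ℝ≥0∞) ^ (m + 1) := by
          have hr : ‖u (m + 1) x‖ ≤ ‖w x‖ ^ (m + 1) := by
            rw [hudef]
            simp only [norm_div, norm_pow, Complex.norm_natCast]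
            refine div_le_self (pow_nonneg (norm_nonneg _) _) ?_
            exact_mod_cast Nat.one_le_iff_ne_zero.mpr (Nat.succ_ne_zero m)
          rw [← ENNReal.coe_pow]
          rw [ENNReal.coe_le_coe, ← NNReal.coe_le_coe]
          push_cast
          simpa using hr
        refine h1.trans ?_
        calc ((‖w x‖₊ : ℝ≥0∞)) ^ (m + 1) = (‖w x‖₊ : ℝ≥0∞) ^ m * (‖w x‖₊ : ℝ≥0∞) := by
              rw [pow_succ]
          _ ≤ ρ ^ m * (‖w x‖₊ : ℝ≥0∞) := mul_le_mul' (pow_le_pow_left' hx m) le_rfl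
      calc (∫⁻ x, (‖u (m + 1) x‖₊ : ℝ≥0∞) ∂μ)
          ≤ ∫⁻ x, ρ ^ m * (‖w x‖₊ : ℝ≥0∞) ∂μ := lintegral_mono_ae hp
        _ = ρ ^ m * ∫⁻ x, (‖w x‖₊ : ℝ≥0∞) ∂μ :=
            lintegral_const_mul' _ _ (ENNReal.pow_ne_top hρt)
        _ = (ρ⁻¹ * ∫⁻ x, (‖w x‖₊ : ℝ≥0∞) ∂μ) * ρ ^ (m + 1) := by
            rw [pow_succ]
            calc ρ ^ m * ∫⁻ x, (‖w x‖₊ : ℝ≥0∞) ∂μ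
                = (ρ⁻¹ * ρ) * ρ ^ m * ∫⁻ x, (‖w x‖₊ : ℝ≥0∞) ∂μ := by
                  rw [ENNReal.inv_mul_cancel hρ0 hρt, one_mul]
              _ = _ := by ring
  have hsum : (∑' n, ∫⁻ x, (‖u n x‖₊ : ℝ≥0∞) ∂μ) ≠ ⊤ := by
    refine ne_top_of_le_ne_top ?_ (ENNReal.tsum_le_tsum hbound)
    rw [ENNReal.tsum_mul_left, ENNReal.tsum_geometric]
    refine ENNReal.mul_ne_top (ENNReal.mul_ne_top (ENNReal.inv_ne_top.mpr hρ0) hA.ne) ?_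
    exact ENNReal.inv_ne_top.mpr (by simpa [tsub_eq_zero_iff_le] using hρ1.not_ge)
  have hswap := integral_tsum husm hsum
  have hlog : (fun x => Complex.log (1 - w x)) =ᵐ[μ] fun x => -∑' n, u n x := by
    filter_upwards [hb] with x hx
    have hn : ‖w x‖ < 1 := by
      have h1 : (‖w x‖₊ : ℝ≥0∞) < 1 := lt_of_le_of_lt hx hρ1
      have h2 : ‖w x‖₊ < 1 := by exact_mod_cast h1
      exact_mod_cast h2
    have hhs := Complex.hasSum_taylorSeries_neg_log hn
    have h3 : ∑' n, u n x = -Complex.log (1 - w x) := by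
      simp only [hudef]
      exact hhs.tsum_eq
    rw [h3, neg_neg]
  rw [integral_congr_ae hlog, integral_neg, hswap]
  congr 1
  refine tsum_congr fun n => ?_
  rw [hudef]
  exact integral_div _ _


/-- Proposition 6 of the paper: if `T = e^{iα} T₁` with `α` real Borel and
`T₁` a `*`-endomorphism of `𝒜`, then `T` preserves all power inner products, hence all the
kernels `S_n` and `K`; i.e. `Γ₂(T)` is an isometry of the quadratic Fock space. -/
theorem statement8 (d : ℕ) (hd : 1 ≤ d) (c : ℝ) (hc : 0 < c)
    (α : Dom d → ℝ) (hα : Measurable α)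
    (T₁ : (Dom d → ℂ) → (Dom d → ℂ)) (hT₁ : IsStarEndo d T₁)
    (T : (Dom d → ℂ) → (Dom d → ℂ))
    (hT : T = fun f x => Complex.exp (Complex.I * α x) * T₁ f x) :
    (∀ k : ℕ, 1 ≤ k → ∀ f g, MemA d f → MemA d g →
      pip d (T f) (T g) k = pip d f g k) ∧
    (∀ n : ℕ, ∀ f g, MemA d f → MemA d g →
      Sker c d (T f) (T g) n = Sker c d f g n) ∧
    (∀ f g, MemA d f → MemA d g →
      eLpNorm f ⊤ (volume : Measure (Dom d)) < 1 / 2 →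
      eLpNorm g ⊤ (volume : Measure (Dom d)) < 1 / 2 →
      Kker c d (T f) (T g) = Kker c d f g) := by
  subst hT
  have hph : ∀ x : Dom d,
      (starRingEnd ℂ) (Complex.exp (Complex.I * α x)) * Complex.exp (Complex.I * α x) = 1 := by
    intro x
    rw [← Complex.exp_conj, ← Complex.exp_add]
    have : (starRingEnd ℂ) (Complex.I * (α x : ℂ)) + Complex.I * (α x : ℂ) = 0 := by
      rw [map_mul, Complex.conj_I, Complex.conj_ofReal]
      ring
    rw [this, Complex.exp_zero]
  have part1 : ∀ k : ℕ, 1 ≤ k → ∀ f g, MemA d f → MemA d g →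
      pip d (fun x => Complex.exp (Complex.I * α x) * T₁ f x)
        (fun x => Complex.exp (Complex.I * α x) * T₁ g x) k = pip d f g k := by
    intro k hk f g hf hg
    obtain ⟨m, rfl⟩ : ∃ m, k = m + 1 := ⟨k - 1, (Nat.succ_pred_eq_of_pos hk).symm⟩
    unfold pip
    have hcong : ∀ x : Dom d,
        (starRingEnd ℂ) (Complex.exp (Complex.I * α x) * T₁ f x) ^ (m + 1) *
            (Complex.exp (Complex.I * α x) * T₁ g x) ^ (m + 1)
          = (starRingEnd ℂ) (T₁ f x) ^ (m + 1) * (T₁ g x) ^ (m + 1) := by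
      intro x
      rw [map_mul]
      calc ((starRingEnd ℂ) (Complex.exp (Complex.I * α x)) * (starRingEnd ℂ) (T₁ f x)) ^ (m + 1) *
            (Complex.exp (Complex.I * α x) * T₁ g x) ^ (m + 1)
          = ((starRingEnd ℂ) (Complex.exp (Complex.I * α x)) * Complex.exp (Complex.I * α x)) ^ (m + 1) *
              ((starRingEnd ℂ) (T₁ f x) ^ (m + 1) * (T₁ g x) ^ (m + 1)) := by ring
        _ = (starRingEnd ℂ) (T₁ f x) ^ (m + 1) * (T₁ g x) ^ (m + 1) := by
            rw [hph x, one_pow, one_mul]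
    rw [integral_congr_ae (Filter.Eventually.of_forall hcong)]
    exact inner_pow hT₁ hf hg m
  refine ⟨part1, ?_, ?_⟩
  · intro n f g hf hg
    unfold Sker
    refine Finset.sum_congr rfl fun p _ => ?_
    congr 1
    refine Finset.prod_congr rfl fun j hj => ?_
    have hj1 : 1 ≤ j := p.parts_pos (Multiset.mem_toFinset.mp hj)
    rw [part1 j hj1 f g hf hg]
  · intro f g hf hg hf2 hg2
    have hRm : max (eLpNorm f ⊤ (volume : Measure (Dom d)))
        (eLpNorm g ⊤ (volume : Measure (Dom d))) < 1 / 2 := max_lt hf2 hg2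
    obtain ⟨s, hs1, hs2⟩ := exists_between hRm
    have hs0 : s ≠ 0 := (lt_of_le_of_lt zero_le hs1).ne'
    have hstop : s ≠ ⊤ := (lt_of_lt_of_le hs2 le_top).ne
    have hFa : ∀ᵐ x ∂(volume : Measure (Dom d)), (‖T₁ f x‖₊ : ℝ≥0∞) < s :=
      ae_lt_of_starEndo hT₁ hf hs0 hstop (lt_of_le_of_lt (le_max_left _ _) hs1)
    have hGa : ∀ᵐ x ∂(volume : Measure (Dom d)), (‖T₁ g x‖₊ : ℝ≥0∞) < s :=
      ae_lt_of_starEndo hT₁ hg hs0 hstop (lt_of_le_of_lt (le_max_right _ _) hs1)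
    have hfa : ∀ᵐ x ∂(volume : Measure (Dom d)), (‖f x‖₊ : ℝ≥0∞) < s := by
      have h0 : ∀ᵐ x ∂(volume : Measure (Dom d)), (‖f x‖₊ : ℝ≥0∞) ≤ eLpNorm f ⊤ volume := by
        rw [eLpNorm_exponent_top]; exact ae_le_eLpNormEssSup
      filter_upwards [h0] with x hx
      exact lt_of_le_of_lt hx (lt_of_le_of_lt (le_max_left _ _) hs1)
    have hga : ∀ᵐ x ∂(volume : Measure (Dom d)), (‖g x‖₊ : ℝ≥0∞) < s := by
      have h0 : ∀ᵐ x ∂(volume : Measure (Dom d)), (‖g x‖₊ : ℝ≥0∞) ≤ eLpNorm g ⊤ volume := by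
        rw [eLpNorm_exponent_top]; exact ae_le_eLpNormEssSup
      filter_upwards [h0] with x hx
      exact lt_of_le_of_lt hx (lt_of_le_of_lt (le_max_right _ _) hs1)
    have hint : ∀ (a b : Dom d → ℂ), MemA d a → MemA d b →
        Integrable (fun x => 4 * (starRingEnd ℂ) (a x) * b x) (volume : Measure (Dom d)) := by
      intro a b ha hb
      have h1 : MemLp (fun x => (starRingEnd ℂ) (a x)) 2 (volume : Measure (Dom d)) :=
        (memA_conj ha).1
      have h2 : MemLp ((fun x => (starRingEnd ℂ) (a x)) • b) 1 (volume : Measure (Dom d)) :=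
        MemLp.smul hb.1 h1
      have h3 : Integrable ((fun x => (starRingEnd ℂ) (a x)) • b) (volume : Measure (Dom d)) :=
        memLp_one_iff_integrable.mp h2
      have h4 := h3.const_mul (4 : ℂ)
      refine h4.congr (Filter.Eventually.of_forall fun x => ?_)
      simp only [Pi.smul_apply', smul_eq_mul]
      ring
    have h2s : 2 * s < 1 := by
      have h1 : 2 * s < 2 * (1 / 2) := by
        rw [ENNReal.mul_lt_mul_iff_right (by norm_num) (by norm_num)]
        exact hs2
      have h2 : (2 : ℝ≥0∞) * (1 / 2) = 1 := by
        rw [one_div, ENNReal.mul_inv_cancel (by norm_num) (by norm_num)]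
      rwa [h2] at h1
    have hρ1 : 2 * s * (2 * s) < 1 := lt_of_le_of_lt (mul_le_of_le_one_right' h2s.le) h2s
    have hρ0 : 2 * s * (2 * s) ≠ 0 := by
      have h2s0 : (2 : ℝ≥0∞) * s ≠ 0 := mul_ne_zero (by norm_num) hs0
      exact mul_ne_zero h2s0 h2s0
    have hρt : 2 * s * (2 * s) ≠ ⊤ := (lt_of_lt_of_le hρ1 le_top).ne
    have hnn : ∀ (a b : Dom d → ℂ) (x : Dom d),
        (‖4 * (starRingEnd ℂ) (a x) * b x‖₊ : ℝ≥0∞)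
          = 2 * (‖a x‖₊ : ℝ≥0∞) * (2 * (‖b x‖₊ : ℝ≥0∞)) := by
      intro a b x
      rw [nnnorm_mul, nnnorm_mul, ENNReal.coe_mul, ENNReal.coe_mul]
      have h4 : (‖(4 : ℂ)‖₊ : ℝ≥0∞) = 4 := by
        have : ‖(4 : ℂ)‖ = 4 := by
          rw [show (4 : ℂ) = ((4 : ℝ) : ℂ) by norm_num, Complex.norm_real]
          norm_num
        rw [← enorm_eq_nnnorm, ← ofReal_norm, this]
        norm_num
      have hc : (‖(starRingEnd ℂ) (a x)‖₊ : ℝ≥0∞) = (‖a x‖₊ : ℝ≥0∞) := by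
        rw [RCLike.nnnorm_conj]
      rw [h4, hc]
      ring
    have hbnd : ∀ (a b : Dom d → ℂ),
        (∀ᵐ x ∂(volume : Measure (Dom d)), (‖a x‖₊ : ℝ≥0∞) < s) →
        (∀ᵐ x ∂(volume : Measure (Dom d)), (‖b x‖₊ : ℝ≥0∞) < s) →
        ∀ᵐ x ∂(volume : Measure (Dom d)),
          (‖4 * (starRingEnd ℂ) (a x) * b x‖₊ : ℝ≥0∞) ≤ 2 * s * (2 * s) := by
      intro a b ha hb
      filter_upwards [ha, hb] with x h1 h2
      rw [hnn a b x]
      exact mul_le_mul' (mul_le_mul' le_rfl h1.le) (mul_le_mul' le_rfl h2.le)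
    have hser := integral_log_one_sub (fun x => 4 * (starRingEnd ℂ) (T₁ f x) * T₁ g x)
      (hint _ _ (hT₁.mem f hf) (hT₁.mem g hg)) hρ0 hρt hρ1 (hbnd _ _ hFa hGa)
    have hser' := integral_log_one_sub (fun x => 4 * (starRingEnd ℂ) (f x) * g x)
      (hint _ _ hf hg) hρ0 hρt hρ1 (hbnd _ _ hfa hga)
    have hmom : ∀ n : ℕ,
        (∫ x : Dom d, (4 * (starRingEnd ℂ) (T₁ f x) * T₁ g x) ^ n)
          = ∫ x : Dom d, (4 * (starRingEnd ℂ) (f x) * g x) ^ n := by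
      intro n
      cases n with
      | zero => simp
      | succ m =>
        have hc1 : (fun x : Dom d => (4 * (starRingEnd ℂ) (T₁ f x) * T₁ g x) ^ (m + 1))
            = fun x => (4 : ℂ) ^ (m + 1) *
              ((starRingEnd ℂ) (T₁ f x) ^ (m + 1) * T₁ g x ^ (m + 1)) := by
          funext x; ring
        have hc2 : (fun x : Dom d => (4 * (starRingEnd ℂ) (f x) * g x) ^ (m + 1))
            = fun x => (4 : ℂ) ^ (m + 1) *
              ((starRingEnd ℂ) (f x) ^ (m + 1) * g x ^ (m + 1)) := by
          funext x; ring
        rw [hc1, hc2, integral_const_mul, integral_const_mul]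
        congr 1
        have h5 : (∫ x : Dom d, (starRingEnd ℂ) (T₁ f x) ^ (m + 1) * T₁ g x ^ (m + 1))
            = pip d f g (m + 1) := inner_pow hT₁ hf hg m
        rw [h5]
        rfl
    have hKint : (∫ x : Dom d, Complex.log (1 - 4 * (starRingEnd ℂ) (T₁ f x) * T₁ g x))
        = ∫ x : Dom d, Complex.log (1 - 4 * (starRingEnd ℂ) (f x) * g x) := by
      rw [hser, hser']
      congr 1
      exact tsum_congr fun n => by rw [hmom n]
    simp only [Kker]
    congr 2
    calc (∫ x : Dom d, Complex.log (1 - 4 *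
            (starRingEnd ℂ) (Complex.exp (Complex.I * α x) * T₁ f x) *
            (Complex.exp (Complex.I * α x) * T₁ g x)))
        = ∫ x : Dom d, Complex.log (1 - 4 * (starRingEnd ℂ) (T₁ f x) * T₁ g x) := by
          refine integral_congr_ae (Filter.Eventually.of_forall fun x => ?_)
          have he : 4 * (starRingEnd ℂ) (Complex.exp (Complex.I * α x) * T₁ f x) *
              (Complex.exp (Complex.I * α x) * T₁ g x)
                = 4 * (starRingEnd ℂ) (T₁ f x) * T₁ g x := by
            rw [map_mul]
            calc 4 * ((starRingEnd ℂ) (Complex.exp (Complex.I * α x)) *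
                    (starRingEnd ℂ) (T₁ f x)) * (Complex.exp (Complex.I * α x) * T₁ g x)
                = ((starRingEnd ℂ) (Complex.exp (Complex.I * α x)) *
                    Complex.exp (Complex.I * α x)) *
                    (4 * (starRingEnd ℂ) (T₁ f x) * T₁ g x) := by ring
              _ = 4 * (starRingEnd ℂ) (T₁ f x) * T₁ g x := by rw [hph x, one_mul]
          show Complex.log _ = Complex.log _
          rw [he]
      _ = ∫ x : Dom d, Complex.log (1 - 4 * (starRingEnd ℂ) (f x) * g x) := hKint
end
end

section
/- Let f, g, f̃, g̃ ∈ 𝒜. If S_n(f̃, g̃) = S_n(f, g) for every integer n ≥ 1, then ⟨f̃^n, g̃^n⟩ = ⟨f^n, g^n⟩ for every integer n ≥ 1. (This is Lemma 8 of the paper: if all the n-particle inner products ⟨B_{f̃}^{+n}Φ, B_{g̃}^{+n}Φ⟩ and ⟨B_f^{+n}Φ, B_g^{+n}Φ⟩ agree, then all the power inner products agree; applied with f̃ = Tf, g̃ = Tg it says that if Γ₂(T) is unitary then ⟨(Tf)^n,(Tg)^n⟩ = ⟨f^n,g^n⟩.) -/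
open MeasureTheory Complex Finset
open scoped Nat ENNReal

noncomputable section

lemma part_eq_indiscrete {n : ℕ} (hn : n ≠ 0) (p : Nat.Partition n)
    (hp : n ∈ p.parts) : p = Nat.Partition.indiscrete n := by
  have h1 : p.parts = n ::ₘ p.parts.erase n := (Multiset.cons_erase hp).symm
  have h2 : (p.parts.erase n).sum = 0 := by
    have := p.parts_sum
    rw [h1, Multiset.sum_cons] at this
    omega
  have h3 : p.parts.erase n = 0 := by
    rw [Multiset.sum_eq_zero_iff] at h2
    by_contra h
    obtain ⟨a, ha⟩ := Multiset.exists_mem_of_ne_zero h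
    have := p.parts_pos (Multiset.mem_of_mem_erase ha)
    have := h2 a ha
    omega
  ext1
  rw [h1, h3, Nat.Partition.indiscrete_parts hn]
  rfl

/-- Lemma 8 of the paper: if `S_n(f̃,g̃) = S_n(f,g)` for every `n ≥ 1`,
then `⟨f̃^n, g̃^n⟩ = ⟨f^n, g^n⟩` for every `n ≥ 1`. -/
theorem statement9 (d : ℕ) (hd : 1 ≤ d) (c : ℝ) (hc : 0 < c)
    (f g ft gt : Dom d → ℂ)
    (hf : MemA d f) (hg : MemA d g) (hft : MemA d ft) (hgt : MemA d gt)
    (hS : ∀ n : ℕ, 1 ≤ n → Sker c d ft gt n = Sker c d f g n) :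
    ∀ n : ℕ, 1 ≤ n → pip d ft gt n = pip d f g n := by
  intro n
  induction n using Nat.strong_induction_on with
  | _ n IH =>
  intro hn
  have hn0 : n ≠ 0 := by omega
  set ind := Nat.Partition.indiscrete n with hind
  have hindparts : ind.parts = {n} := Nat.Partition.indiscrete_parts hn0
  -- term function
  set A : ℂ := (n ! : ℂ) ^ 2 * 2 ^ (2 * n - 1) * ((c : ℂ) / n) with hA
  have hA0 : A ≠ 0 := by
    apply mul_ne_zero (mul_ne_zero (pow_ne_zero _ (Nat.cast_ne_zero.mpr n.factorial_ne_zero))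
      (pow_ne_zero _ two_ne_zero))
    apply div_ne_zero
    · exact_mod_cast hc.ne'
    · exact_mod_cast hn0
  have hterm : ∀ F G : Dom d → ℂ,
      (n ! : ℂ) ^ 2 * 2 ^ (2 * n - 1) *
        ∏ j ∈ ind.parts.toFinset,
          (c : ℂ) ^ ind.parts.count j /
              (((ind.parts.count j)! : ℂ) * (j : ℂ) ^ ind.parts.count j) *
            pip d F G j ^ ind.parts.count j = A * pip d F G n := by
    intro F G
    rw [hindparts]
    simp [A, mul_assoc, div_eq_mul_inv]
  have hsplit : ∀ F G : Dom d → ℂ, Sker c d F G n =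
      A * pip d F G n + ∑ p ∈ (Finset.univ : Finset (Nat.Partition n)).erase ind,
        (n ! : ℂ) ^ 2 * 2 ^ (2 * n - 1) *
          ∏ j ∈ p.parts.toFinset,
            (c : ℂ) ^ p.parts.count j /
                (((p.parts.count j)! : ℂ) * (j : ℂ) ^ p.parts.count j) *
              pip d F G j ^ p.parts.count j := by
    intro F G
    rw [Sker, ← Finset.add_sum_erase _ _ (Finset.mem_univ ind), hterm]
  have hrest : ∀ p ∈ (Finset.univ : Finset (Nat.Partition n)).erase ind,
      (n ! : ℂ) ^ 2 * 2 ^ (2 * n - 1) *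
        ∏ j ∈ p.parts.toFinset,
          (c : ℂ) ^ p.parts.count j /
              (((p.parts.count j)! : ℂ) * (j : ℂ) ^ p.parts.count j) *
            pip d ft gt j ^ p.parts.count j =
      (n ! : ℂ) ^ 2 * 2 ^ (2 * n - 1) *
        ∏ j ∈ p.parts.toFinset,
          (c : ℂ) ^ p.parts.count j /
              (((p.parts.count j)! : ℂ) * (j : ℂ) ^ p.parts.count j) *
            pip d f g j ^ p.parts.count j := by
    intro p hp
    have hpne : p ≠ ind := (Finset.mem_erase.mp hp).1
    congr 1
    apply Finset.prod_congr rfl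
    intro j hj
    have hjm : j ∈ p.parts := Multiset.mem_toFinset.mp hj
    have hj1 : 1 ≤ j := p.parts_pos hjm
    have hjle : j ≤ n := by
      have := Multiset.single_le_sum (fun x _ => Nat.zero_le x) j hjm
      rwa [p.parts_sum] at this
    have hjn : j ≠ n := fun h => hpne (part_eq_indiscrete hn0 p (h ▸ hjm))
    rw [IH j (by omega) (by omega)]
  have h := hS n hn
  rw [hsplit ft gt, hsplit f g, Finset.sum_congr rfl hrest] at h
  have := add_right_cancel h
  exact mul_left_cancel₀ hA0 this
end
end

section
/- Let h ∈ 𝒜 be such that ∫_{ℝ^d} |h(x)|^{2n} dx = ∫_{ℝ^d} |h(x)|² dx for every integer n ≥ 1. Then |h(x)| ∈ {0,1} for almost every x ∈ ℝ^d; that is, |h| coincides almost everywhere with the indicator function of its support. (This is the content of Lemma 9 of the paper: if Γ₂(T) is an isometry then |T(χ_I)| = 1 a.e. on the support of T(χ_I).) -/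
open MeasureTheory Complex Finset
open scoped Nat ENNReal

noncomputable section

/-- Lemma 9 of the paper: if `h ∈ 𝒜` satisfies
`∫ |h|^{2n} = ∫ |h|²` for all `n ≥ 1`, then `|h(x)| ∈ {0,1}` almost everywhere,
i.e. `|h|` is a.e. the indicator of its support. -/
theorem statement10 (d : ℕ) (hd : 1 ≤ d)
    (h : Dom d → ℂ) (hh : MemA d h)
    (hint : ∀ n : ℕ, 1 ≤ n →
      ∫ x : Dom d, ‖h x‖ ^ (2 * n) = ∫ x : Dom d, ‖h x‖ ^ 2) :
    (∀ᵐ x ∂(volume : Measure (Dom d)), ‖h x‖ = 0 ∨ ‖h x‖ = 1) ∧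
    (fun x => ‖h x‖) =ᵐ[(volume : Measure (Dom d))]
      Set.indicator {x | h x ≠ 0} (fun _ => (1 : ℝ)) := by
  set μ : Measure (Dom d) := volume
  have hsm : AEStronglyMeasurable h μ := hh.1.aestronglyMeasurable
  have hgsm : AEStronglyMeasurable (fun x => ‖h x‖) μ := hsm.norm
  -- integrability of ‖h‖^2
  have i2 : Integrable (fun x => ‖h x‖ ^ 2) μ :=
    (memLp_two_iff_integrable_sq_norm hsm).mp hh.1
  -- a.e. bound by essential sup
  set C : ℝ := (eLpNormEssSup h μ).toReal with hC
  have hCfin : eLpNormEssSup h μ < ⊤ := by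
    have := hh.2.2
    rwa [eLpNorm_exponent_top] at this
  have hbd : ∀ᵐ x ∂μ, ‖h x‖ ≤ C := by
    filter_upwards [ae_le_eLpNormEssSup (f := h) (μ := μ)] with x hx
    have : (‖h x‖₊ : ℝ≥0∞).toReal ≤ C :=
      ENNReal.toReal_mono hCfin.ne hx
    simpa using this
  -- integrability of higher even powers
  have ipow : ∀ k : ℕ, Integrable (fun x => ‖h x‖ ^ (2 * k + 2)) μ := by
    intro k
    refine Integrable.mono' (i2.const_mul (C ^ (2 * k)))
      (hgsm.pow _) ?_
    filter_upwards [hbd] with x hx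
    have h0 : (0 : ℝ) ≤ ‖h x‖ := norm_nonneg _
    have hle : ‖h x‖ ^ (2 * k) ≤ C ^ (2 * k) := pow_le_pow_left₀ h0 hx _
    have : ‖h x‖ ^ (2 * k + 2) = ‖h x‖ ^ (2 * k) * ‖h x‖ ^ 2 := by ring
    rw [Real.norm_of_nonneg (pow_nonneg h0 _), this]
    exact mul_le_mul_of_nonneg_right hle (pow_nonneg h0 _)
  have i4 : Integrable (fun x => ‖h x‖ ^ 4) μ := by simpa using ipow 1
  have i6 : Integrable (fun x => ‖h x‖ ^ 6) μ := by simpa using ipow 2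
  have e4 : ∫ x, ‖h x‖ ^ 4 ∂μ = ∫ x, ‖h x‖ ^ 2 ∂μ := by
    simpa using hint 2 (by norm_num)
  have e6 : ∫ x, ‖h x‖ ^ 6 ∂μ = ∫ x, ‖h x‖ ^ 2 ∂μ := by
    simpa using hint 3 (by norm_num)
  -- the nonnegative function with zero integral
  set F : Dom d → ℝ := fun x => ‖h x‖ ^ 2 * (‖h x‖ ^ 2 - 1) ^ 2 with hF
  have hFeq : F = fun x => ‖h x‖ ^ 6 - 2 * ‖h x‖ ^ 4 + ‖h x‖ ^ 2 := by
    funext x; simp only [hF]; ring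
  have iF : Integrable F μ := by
    rw [hFeq]; exact (i6.sub (i4.const_mul 2)).add i2
  have hFint : ∫ x, F x ∂μ = 0 := by
    have h1 : ∫ x, F x ∂μ
        = ∫ x, (‖h x‖ ^ 6 - 2 * ‖h x‖ ^ 4) ∂μ + ∫ x, ‖h x‖ ^ 2 ∂μ := by
      rw [hFeq]; exact integral_add (i6.sub (i4.const_mul 2)) i2
    have h2 : ∫ x, (‖h x‖ ^ 6 - 2 * ‖h x‖ ^ 4) ∂μ
        = ∫ x, ‖h x‖ ^ 6 ∂μ - ∫ x, 2 * ‖h x‖ ^ 4 ∂μ :=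
      integral_sub i6 (i4.const_mul 2)
    rw [h1, h2, integral_const_mul, e4, e6]; ring
  have hF0 : F =ᵐ[μ] 0 := by
    have hnn : 0 ≤ᵐ[μ] F := by
      filter_upwards with x
      exact mul_nonneg (pow_nonneg (norm_nonneg _) _) (sq_nonneg _)
    exact (integral_eq_zero_iff_of_nonneg_ae hnn iF).mp hFint
  have key : ∀ᵐ x ∂μ, ‖h x‖ = 0 ∨ ‖h x‖ = 1 := by
    filter_upwards [hF0] with x hx
    simp only [hF, Pi.zero_apply] at hx
    rcases mul_eq_zero.mp hx with h1 | h1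
    · left
      have := pow_eq_zero_iff (n := 2) (by norm_num) |>.mp h1
      exact this
    · right
      have h2 : ‖h x‖ ^ 2 = 1 := by
        have := pow_eq_zero_iff (n := 2) (by norm_num) |>.mp h1
        linarith
      nlinarith [norm_nonneg (h x)]
  refine ⟨key, ?_⟩
  filter_upwards [key] with x hx
  rcases hx with hx | hx
  · have hx0 : h x = 0 := norm_eq_zero.mp hx
    simp [Set.indicator, hx0, hx]
  · have hx0 : h x ≠ 0 := by
      intro hc; rw [hc] at hx; simp at hx
    simp [Set.indicator, hx0, hx]
end
end

section
/- Let T: 𝒜 → 𝒜 be a linear map which preserves power inner products. For a measurable set I ⊆ ℝ^d of finite Lebesgue measure let χ_I denote its indicator function and let τ(I) := {x ∈ ℝ^d : (Tχ_I)(x) ≠ 0} (defined up to a null set). Then: (i) |(Tχ_I)(x)| = 1 for almost every x ∈ τ(I), i.e. Tχ_I = e^{iα_I}·χ_{τ(I)} a.e. for some measurable α_I: ℝ^d → ℝ; (ii) the Lebesgue measures satisfy |τ(I)| = |I|; (iii) if I = I₁ ∪ I₂ with I₁, I₂ disjoint measurable sets, then τ(I) = τ(I₁) ∪ τ(I₂)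 up to a null set; in particular I₁ ⊆ I implies τ(I₁) ⊆ τ(I) up to a null set. -/
open MeasureTheory Complex Finset Filter
open scoped Nat ENNReal

noncomputable section

/-- The indicator function `χ_I` of a set `I ⊆ ℝ^d`, as an element of `𝒜`. -/
def chi (d : ℕ) (I : Set (Dom d)) : Dom d → ℂ := I.indicator 1

/-- `τ(I) = {x : (Tχ_I)(x) ≠ 0}`, the support of `Tχ_I`. -/
def tau (d : ℕ) (T : (Dom d → ℂ) → (Dom d → ℂ)) (I : Set (Dom d)) : Set (Dom d) :=
  {x | T (chi d I) x ≠ 0}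

lemma memA_chi (d : ℕ) {J : Set (Dom d)} (hJ : MeasurableSet J) (hJfin : volume J < ⊤) :
    MemA d (chi d J) := by
  constructor
  · exact memLp_indicator_const 2 hJ (1 : ℂ) (Or.inr hJfin.ne)
  · exact memLp_indicator_const ⊤ hJ (1 : ℂ) (Or.inr hJfin.ne)

lemma pip_chi (d : ℕ) {J : Set (Dom d)} (hJ : MeasurableSet J) {k : ℕ} (hk : 1 ≤ k) :
    pip d (chi d J) (chi d J) k = ((volume J).toReal : ℂ) := by
  have hne : k ≠ 0 := Nat.one_le_iff_ne_zero.mp hk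
  have heq : (fun x => (starRingEnd ℂ) (chi d J x) ^ k * chi d J x ^ k)
      = J.indicator (fun _ => (1 : ℂ)) := by
    funext x
    by_cases hx : x ∈ J <;>
      simp [chi, Set.indicator_of_mem, Set.indicator_of_notMem, hx, hne]
  rw [pip, heq, integral_indicator_const _ hJ]
  simp
  rfl

lemma key (d : ℕ) (T : (Dom d → ℂ) → (Dom d → ℂ))
    (hTmem : ∀ f, MemA d f → MemA d (T f))
    (hppip : ∀ k : ℕ, 1 ≤ k → ∀ f g, MemA d f → MemA d g →
      pip d (T f) (T g) k = pip d f g k)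
    (J : Set (Dom d)) (hJ : MeasurableSet J) (hJfin : volume J < ⊤) :
    (∀ᵐ x ∂(volume : Measure (Dom d)), ‖T (chi d J) x‖ = 0 ∨ ‖T (chi d J) x‖ = 1) ∧
    ∃ s : Set (Dom d), MeasurableSet s ∧
      (tau d T J : Set (Dom d)) =ᵐ[(volume : Measure (Dom d))] s ∧ volume s = volume J := by
  have hmemJ : MemA d (chi d J) := memA_chi d hJ hJfin
  have hmem : MemA d (T (chi d J)) := hTmem _ hmemJ
  set g : Dom d → ℂ := T (chi d J) with hgdef
  set h : Dom d → ℝ := fun x => ‖g x‖ ^ 2 with hhdef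
  set c : ℝ := (volume J).toReal with hcdef
  -- the integrals of h^k equal c
  have hint : ∀ k : ℕ, 1 ≤ k → ∫ x, (h x) ^ k = c := by
    intro k hk
    have hpipk := hppip k hk _ _ hmemJ hmemJ
    rw [pip_chi d hJ hk] at hpipk
    have heq : (fun x => (starRingEnd ℂ) (g x) ^ k * g x ^ k)
        = fun x => (((h x) ^ k : ℝ) : ℂ) := by
      funext x
      rw [← mul_pow]
      have : (starRingEnd ℂ) (g x) * g x = ((h x : ℝ) : ℂ) := by
        rw [← Complex.normSq_eq_conj_mul_self, hhdef]
        norm_cast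
        rw [Complex.normSq_eq_norm_sq]
      rw [this]
      push_cast
      ring
    have hcast : ((∫ x, (h x) ^ k : ℝ) : ℂ) = (((volume J).toReal : ℝ) : ℂ) := by
      rw [← hpipk, pip, heq]
      exact (integral_ofReal (𝕜 := ℂ)).symm
    exact_mod_cast hcast
  -- integrability
  have hH1 : Integrable h (volume : Measure (Dom d)) := by
    have := hmem.1.integrable_norm_rpow two_ne_zero ENNReal.ofNat_ne_top
    simp only [ENNReal.toReal_ofNat] at this
    refine this.congr (Eventually.of_forall fun x => ?_)
    show ‖g x‖ ^ (2:ℝ) = ‖g x‖ ^ (2:ℕ)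
    exact Real.rpow_two _
  set C : ℝ := max ((eLpNormEssSup g (volume : Measure (Dom d))).toReal) 1 with hCdef
  have hC : ∀ᵐ x ∂(volume : Measure (Dom d)), ‖g x‖ ≤ C := by
    filter_upwards [ae_le_eLpNormEssSup (f := g) (μ := (volume : Measure (Dom d)))] with x hx
    have hlt : eLpNormEssSup g (volume : Measure (Dom d)) < ⊤ := by
      have := hmem.2.2
      rwa [eLpNorm_exponent_top] at this
    have : ((‖g x‖₊ : ℝ≥0∞)).toReal ≤ (eLpNormEssSup g (volume : Measure (Dom d))).toReal :=
      ENNReal.toReal_mono hlt.ne hx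
    exact le_trans (by simpa using this) (le_max_left _ _)
  have hHk : ∀ k : ℕ, Integrable (fun x => (h x) ^ (k + 1)) (volume : Measure (Dom d)) := by
    intro k
    refine Integrable.mono' (hH1.const_mul ((C ^ 2) ^ k)) ?_ ?_
    · exact (hH1.aestronglyMeasurable.pow _)
    · filter_upwards [hC] with x hx
      have h0 : 0 ≤ h x := sq_nonneg _
      have hb : h x ≤ C ^ 2 := by
        rw [hhdef]
        exact pow_le_pow_left₀ (norm_nonneg _) hx 2
      have : h x ^ (k + 1) ≤ (C ^ 2) ^ k * h x := by
        rw [pow_succ]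
        exact mul_le_mul_of_nonneg_right (pow_le_pow_left₀ h0 hb k) h0
      calc ‖h x ^ (k + 1)‖ = h x ^ (k + 1) := by
            rw [Real.norm_eq_abs, _root_.abs_of_nonneg (pow_nonneg h0 _)]
        _ ≤ (C ^ 2) ^ k * h x := this
  have e1 : ∫ x, h x = c := by simpa using hint 1 le_rfl
  have e2 : ∫ x, (h x) ^ 2 = c := hint 2 (by norm_num)
  have e3 : ∫ x, (h x) ^ 3 = c := hint 3 (by norm_num)
  have hH2 : Integrable (fun x => (h x) ^ 2) (volume : Measure (Dom d)) := by
    simpa using hHk 1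
  have hH3 : Integrable (fun x => (h x) ^ 3) (volume : Measure (Dom d)) := by
    simpa using hHk 2
  set q : Dom d → ℝ := fun x => h x * (h x - 1) ^ 2 with hqdef
  have hq_eq : q = fun x => ((h x) ^ 3 - 2 * (h x) ^ 2) + h x := by
    funext x; rw [hqdef]; ring
  have hq_int : Integrable q (volume : Measure (Dom d)) := by
    rw [hq_eq]; exact (hH3.sub (hH2.const_mul 2)).add hH1
  have hq0 : ∫ x, q x = 0 := by
    have hsum : ∫ x, ((h x) ^ 3 - 2 * (h x) ^ 2 + h x) =
        (∫ x, ((h x) ^ 3 - 2 * (h x) ^ 2)) + ∫ x, h x :=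
      integral_add (hH3.sub (hH2.const_mul 2)) hH1
    have hsub : ∫ x, ((h x) ^ 3 - 2 * (h x) ^ 2) = (∫ x, (h x) ^ 3) - ∫ x, 2 * (h x) ^ 2 :=
      integral_sub hH3 (hH2.const_mul 2)
    calc ∫ x, q x = ∫ x, ((h x) ^ 3 - 2 * (h x) ^ 2 + h x) := by simp only [hq_eq]
      _ = 0 := by rw [hsum, hsub, integral_const_mul, e1, e2, e3]; ring
  have hqae : q =ᵐ[(volume : Measure (Dom d))] 0 :=
    (integral_eq_zero_iff_of_nonneg
      (fun x => mul_nonneg (sq_nonneg _) (sq_nonneg _)) hq_int).1 hq0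
  have h01 : ∀ᵐ x ∂(volume : Measure (Dom d)), ‖g x‖ = 0 ∨ ‖g x‖ = 1 := by
    filter_upwards [hqae] with x hx
    have hx' : h x * (h x - 1) ^ 2 = 0 := hx
    rcases mul_eq_zero.1 hx' with h0 | h1
    · left
      have := pow_eq_zero_iff (n := 2) (by norm_num) |>.1 h0
      exact this
    · right
      have hx1 : h x = 1 := by
        have := pow_eq_zero_iff (n := 2) (by norm_num) |>.1 h1
        linarith
      have hsq : ‖g x‖ ^ 2 = 1 := hx1
      nlinarith [norm_nonneg (g x), hsq]
  refine ⟨h01, ?_⟩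
  -- measurable version of the support
  set g' : Dom d → ℂ := hmem.1.1.mk g with hg'def
  have hg'ae : g =ᵐ[(volume : Measure (Dom d))] g' := hmem.1.1.ae_eq_mk
  have hg'm : Measurable g' := hmem.1.1.measurable_mk
  set s : Set (Dom d) := {x | g' x ≠ 0} with hsdef
  have hs : MeasurableSet s := by
    have := hg'm (MeasurableSet.compl (measurableSet_singleton (0 : ℂ)))
    simpa [Set.preimage, hsdef] using this
  have htaus : (tau d T J : Set (Dom d)) =ᵐ[(volume : Measure (Dom d))] s := by
    rw [eventuallyEq_set]
    filter_upwards [hg'ae] with x hx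
    exact ⟨fun hm h0 => hm (hx.trans h0), fun hm h0 => hm (hx.symm.trans h0)⟩
  have hind : h =ᵐ[(volume : Measure (Dom d))] s.indicator (fun _ => (1 : ℝ)) := by
    filter_upwards [hg'ae, h01] with x hx hx01
    by_cases hxs : g' x = 0
    · have : g x = 0 := by rw [hx, hxs]
      rw [Set.indicator_of_notMem (by simpa [hsdef] using hxs)]
      simp [hhdef, this]
    · rw [Set.indicator_of_mem (by simpa [hsdef] using hxs)]
      have hgx : g x ≠ 0 := by rw [hx]; exact hxs
      rcases hx01 with h0 | h1
      · exact absurd (norm_eq_zero.1 h0) hgx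
      · show ‖g x‖ ^ 2 = 1
        rw [h1]; norm_num
  have hind_int : Integrable (s.indicator (fun _ => (1 : ℝ))) (volume : Measure (Dom d)) :=
    hH1.congr hind
  have hsfin : volume s < ⊤ := by
    have := (integrable_indicator_iff hs).1 hind_int
    rcases (integrableOn_const_iff (C := (1 : ℝ))).1 this with h | h
    · norm_num at h
    · exact h
  have hval : (volume s).toReal = c := by
    have := integral_congr_ae hind
    rw [integral_indicator_const _ hs] at this
    simp only [smul_eq_mul, mul_one] at this
    rw [← measureReal_def, ← this, e1]
  refine ⟨s, hs, htaus, ?_⟩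
  rw [hcdef] at hval
  exact (ENNReal.toReal_eq_toReal_iff' hsfin.ne hJfin.ne).1 hval


/-- Lemma 10 of the paper: if the linear map `T : 𝒜 → 𝒜` preserves
power inner products (i.e. `Γ₂(T)` is an isometry), then for every measurable `I` of
finite measure: (i) `|Tχ_I| = 1` a.e. on `τ(I)`, i.e. `Tχ_I = e^{iα_I} χ_{τ(I)}`;
(ii) `|τ(I)| = |I|`; (iii) `τ` is additive on disjoint partitions and monotone,
up to null sets. -/
theorem statement11 (d : ℕ) (hd : 1 ≤ d)
    (T : (Dom d → ℂ) → (Dom d → ℂ))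
    (hTmem : ∀ f, MemA d f → MemA d (T f))
    (hTae : ∀ f g, MemA d f → MemA d g → f =ᵐ[(volume : Measure (Dom d))] g →
      T f =ᵐ[(volume : Measure (Dom d))] T g)
    (hTadd : ∀ f g, MemA d f → MemA d g →
      T (f + g) =ᵐ[(volume : Measure (Dom d))] T f + T g)
    (hTsmul : ∀ (a : ℂ) (f : Dom d → ℂ), MemA d f →
      T (a • f) =ᵐ[(volume : Measure (Dom d))] a • T f)
    (hppip : ∀ k : ℕ, 1 ≤ k → ∀ f g, MemA d f → MemA d g →
      pip d (T f) (T g) k = pip d f g k)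
    (I : Set (Dom d)) (hI : MeasurableSet I)
    (hIfin : volume I < ⊤) :
    (∀ᵐ x ∂(volume : Measure (Dom d)), x ∈ tau d T I → ‖T (chi d I) x‖ = 1) ∧
    (∃ αI : Dom d → ℝ, Measurable αI ∧
      T (chi d I) =ᵐ[(volume : Measure (Dom d))]
        fun x => Complex.exp (Complex.I * αI x) * chi d (tau d T I) x) ∧
    volume (tau d T I) = volume I ∧
    (∀ I₁ I₂ : Set (Dom d), MeasurableSet I₁ → MeasurableSet I₂ →
      Disjoint I₁ I₂ → I = I₁ ∪ I₂ →
      ∀ᵐ x ∂(volume : Measure (Dom d)),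
        x ∈ tau d T I ↔ x ∈ tau d T I₁ ∪ tau d T I₂) ∧
    (∀ I₁ : Set (Dom d), MeasurableSet I₁ → I₁ ⊆ I →
      ∀ᵐ x ∂(volume : Measure (Dom d)), x ∈ tau d T I₁ → x ∈ tau d T I) := by
  have hmemI : MemA d (chi d I) := memA_chi d hI hIfin
  obtain ⟨h01, s, hs, htaus, hμs⟩ := key d T hTmem hppip I hI hIfin
  have part1 : ∀ᵐ x ∂(volume : Measure (Dom d)),
      x ∈ tau d T I → ‖T (chi d I) x‖ = 1 := by
    filter_upwards [h01] with x hx hmemx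
    rcases hx with h0 | h1
    · exact absurd (norm_eq_zero.1 h0) hmemx
    · exact h1
  have hμτ : volume (tau d T I) = volume I := (measure_congr htaus).trans hμs
  have part4 : ∀ I₁ I₂ : Set (Dom d), MeasurableSet I₁ → MeasurableSet I₂ →
      Disjoint I₁ I₂ → I = I₁ ∪ I₂ →
      ∀ᵐ x ∂(volume : Measure (Dom d)),
        x ∈ tau d T I ↔ x ∈ tau d T I₁ ∪ tau d T I₂ := by
    intro I₁ I₂ h1m h2m hdisj hI12
    have hsub1 : I₁ ⊆ I := by rw [hI12]; exact Set.subset_union_left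
    have hsub2 : I₂ ⊆ I := by rw [hI12]; exact Set.subset_union_right
    have hfin1 : volume I₁ < ⊤ := lt_of_le_of_lt (measure_mono hsub1) hIfin
    have hfin2 : volume I₂ < ⊤ := lt_of_le_of_lt (measure_mono hsub2) hIfin
    obtain ⟨h011, s₁, hs₁, ht₁, hμ₁⟩ := key d T hTmem hppip I₁ h1m hfin1
    obtain ⟨h012, s₂, hs₂, ht₂, hμ₂⟩ := key d T hTmem hppip I₂ h2m hfin2
    have hchi : chi d I = chi d I₁ + chi d I₂ := by
      rw [hI12]
      exact Set.indicator_union_of_disjoint hdisj 1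
    have hadd : T (chi d I) =ᵐ[(volume : Measure (Dom d))]
        T (chi d I₁) + T (chi d I₂) := by
      rw [hchi]; exact hTadd _ _ (memA_chi d h1m hfin1) (memA_chi d h2m hfin2)
    have hsubae : tau d T I ≤ᵐ[(volume : Measure (Dom d))]
        ((tau d T I₁ ∪ tau d T I₂ : Set (Dom d))) := by
      filter_upwards [hadd] with x hx
      intro hmemx
      by_contra hcon
      have h10 : T (chi d I₁) x = 0 := by
        by_contra hh; exact hcon (Set.mem_union_left _ hh)
      have h20 : T (chi d I₂) x = 0 := by
        by_contra hh; exact hcon (Set.mem_union_right _ hh)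
      apply hmemx
      rw [hx, Pi.add_apply, h10, h20, add_zero]
    have hμτ1 : volume (tau d T I₁) = volume I₁ := (measure_congr ht₁).trans hμ₁
    have hμτ2 : volume (tau d T I₂) = volume I₂ := (measure_congr ht₂).trans hμ₂
    have hμI : volume I = volume I₁ + volume I₂ := by
      rw [hI12]; exact measure_union hdisj h2m
    have hle : volume (tau d T I₁ ∪ tau d T I₂) ≤ volume (tau d T I) := by
      calc volume (tau d T I₁ ∪ tau d T I₂)
          ≤ volume (tau d T I₁) + volume (tau d T I₂) := measure_union_le _ _
        _ = volume I := by rw [hμτ1, hμτ2, hμI]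
        _ = volume (tau d T I) := hμτ.symm
    have hne : volume (tau d T I₁ ∪ tau d T I₂) ≠ ⊤ := by
      refine ne_of_lt (lt_of_le_of_lt hle ?_)
      rw [hμτ]; exact hIfin
    have hnull : NullMeasurableSet (tau d T I) (volume : Measure (Dom d)) :=
      (hs.nullMeasurableSet).congr htaus.symm
    have heq := ae_eq_of_ae_subset_of_measure_ge hsubae hle hnull hne
    exact eventuallyEq_set.1 heq
  refine ⟨part1, ?_, hμτ, part4, ?_⟩
  · -- the phase function
    have hasm : AEStronglyMeasurable (T (chi d I)) (volume : Measure (Dom d)) :=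
      ((hTmem _ hmemI).1).1
    refine ⟨fun x => Complex.arg (hasm.mk _ x),
      Complex.measurable_arg.comp hasm.measurable_mk, ?_⟩
    filter_upwards [hasm.ae_eq_mk, part1] with x hx hx1
    by_cases hx0 : T (chi d I) x = 0
    · have hnot : x ∉ tau d T I := fun hmm => hmm hx0
      have hzero : chi d (tau d T I) x = 0 := Set.indicator_of_notMem hnot _
      show T (chi d I) x = _ * chi d (tau d T I) x
      rw [hzero, mul_zero, hx0]
    · have hmemx : x ∈ tau d T I := hx0
      have h1 : ‖T (chi d I) x‖ = 1 := hx1 hmemx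
      show T (chi d I) x =
        Complex.exp (Complex.I * (Complex.arg (hasm.mk _ x) : ℂ)) * chi d (tau d T I) x
      have hone : chi d (tau d T I) x = 1 := Set.indicator_of_mem hmemx _
      rw [hone, mul_one, ← hx]
      have habs : ((‖T (chi d I) x‖ : ℝ) : ℂ) = 1 := by
        rw [h1]
        norm_num
      calc T (chi d I) x
          = ((‖T (chi d I) x‖ : ℝ) : ℂ) *
            Complex.exp ((Complex.arg (T (chi d I) x) : ℂ) * Complex.I) :=
            (Complex.norm_mul_exp_arg_mul_I _).symm
        _ = Complex.exp (Complex.I * (Complex.arg (T (chi d I) x) : ℂ)) := by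
            rw [habs, one_mul, mul_comm]
  · -- monotonicity
    intro I₁ h1m hsub
    have hiff := part4 I₁ (I \ I₁) h1m (hI.diff h1m) Set.disjoint_sdiff_right
      (Set.union_diff_cancel hsub).symm
    filter_upwards [hiff] with x hx hmem1
    exact hx.2 (Set.mem_union_left _ hmem1)
end
end

section
/- Let T: 𝒜 → 𝒜 be a linear map which preserves power inner products, and for a measurable set I ⊆ ℝ^d of finite Lebesgue measure let τ(I) := {x ∈ ℝ^d : (Tχ_I)(x) ≠ 0}, where χ_I is the indicator of I. If I₁, I₂ ⊆ ℝ^d are measurable sets of finite Lebesgue measure with |I₁ ∩ I₂| = 0, then |τ(I₁) ∩ τ(I₂)| = 0. -/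
open MeasureTheory Complex Finset
open scoped Nat ENNReal

noncomputable section

-- pointwise identity
lemma my_norm_identity (u v : ℂ) :
    ‖u+v‖^4 + ‖u-v‖^4
      = 2*‖u‖^4 + 2*‖v‖^4 + 4*(‖u‖^2*‖v‖^2) + 8*(((starRingEnd ℂ) u * v).re)^2 := by
  have h4 : ∀ z : ℂ, ‖z‖^4 = (z.re^2 + z.im^2)^2 := by
    intro z
    have h2 : ‖z‖^2 = z.re^2 + z.im^2 := by
      rw [Complex.sq_norm, Complex.normSq_apply]; ring
    calc ‖z‖^4 = (‖z‖^2)^2 := by ring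
    _ = (z.re^2 + z.im^2)^2 := by rw [h2]
  have h2 : ∀ z : ℂ, ‖z‖^2 = z.re^2 + z.im^2 := by
    intro z; rw [Complex.sq_norm, Complex.normSq_apply]; ring
  rw [h4, h4, h4, h4, h2, h2]
  simp [Complex.add_re, Complex.add_im, Complex.sub_re, Complex.sub_im,
    Complex.mul_re, Complex.conj_re, Complex.conj_im]
  ring

lemma my_pip_self (d : ℕ) (h : Dom d → ℂ) :
    pip d h h 2 = Complex.ofReal (∫ x : Dom d, ‖h x‖^4) := by
  rw [pip]
  have : ∀ x : Dom d, (starRingEnd ℂ) (h x) ^ 2 * (h x) ^ 2 = ((‖h x‖^4 : ℝ) : ℂ) := by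
    intro x
    have e1 : (starRingEnd ℂ) (h x) ^ 2 * (h x) ^ 2 = ((h x) * (starRingEnd ℂ) (h x))^2 := by ring
    rw [e1, Complex.mul_conj]
    rw [show Complex.normSq (h x) = ‖h x‖^2 by rw [Complex.sq_norm]]
    push_cast
    ring
  simp only [this]
  exact integral_ofReal (𝕜 := ℂ) (μ := (volume : Measure (Dom d))) (f := fun x => ‖h x‖ ^ 4)

lemma my_bound (d : ℕ) {h : Dom d → ℂ} (hm : MemA d h) :
    ∃ C : ℝ, ∀ᵐ x : Dom d ∂volume, ‖h x‖ ≤ C := by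
  have hfin : eLpNormEssSup h (volume : Measure (Dom d)) ≠ ⊤ := by
    have := hm.2.2
    rwa [eLpNorm_exponent_top, lt_top_iff_ne_top] at this
  refine ⟨(eLpNormEssSup h (volume : Measure (Dom d))).toReal, ?_⟩
  filter_upwards [ae_le_eLpNormEssSup (f := h) (μ := (volume : Measure (Dom d)))] with x hx
  have := ENNReal.toReal_mono hfin hx
  simpa using this

lemma my_int_sq (d : ℕ) {h : Dom d → ℂ} (hm : MemA d h) :
    Integrable (fun x => ‖h x‖^2) (volume : Measure (Dom d)) :=
  (memLp_two_iff_integrable_sq_norm hm.1.aestronglyMeasurable).1 hm.1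

lemma my_int_pow4 (d : ℕ) {h : Dom d → ℂ} (hm : MemA d h) :
    Integrable (fun x => ‖h x‖^4) (volume : Measure (Dom d)) := by
  obtain ⟨C, hC⟩ := my_bound d hm
  refine Integrable.mono' ((my_int_sq d hm).const_mul (C^2))
    (hm.1.aestronglyMeasurable.norm.pow 4) ?_
  filter_upwards [hC] with x hx
  have h0 : (0:ℝ) ≤ ‖h x‖ := norm_nonneg _
  rw [Real.norm_eq_abs, _root_.abs_of_nonneg (by positivity)]
  have hx2 : ‖h x‖^2 ≤ C^2 := by nlinarith
  calc ‖h x‖^4 = ‖h x‖^2 * ‖h x‖^2 := by ring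
  _ ≤ C^2 * ‖h x‖^2 := mul_le_mul_of_nonneg_right hx2 (sq_nonneg _)

lemma my_int_prod (d : ℕ) {u v : Dom d → ℂ} (hu : MemA d u) (hv : MemA d v) :
    Integrable (fun x => ‖u x‖^2 * ‖v x‖^2) (volume : Measure (Dom d)) := by
  obtain ⟨C, hC⟩ := my_bound d hu
  refine Integrable.mono' ((my_int_sq d hv).const_mul (C^2))
    ((hu.1.aestronglyMeasurable.norm.pow 2).mul (hv.1.aestronglyMeasurable.norm.pow 2)) ?_
  filter_upwards [hC] with x hx
  have h0 : (0:ℝ) ≤ ‖u x‖ := norm_nonneg _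
  have h1 : (0:ℝ) ≤ ‖v x‖ := norm_nonneg _
  rw [Real.norm_eq_abs, _root_.abs_of_nonneg (by positivity)]
  have hx2 : ‖u x‖^2 ≤ C^2 := by nlinarith
  exact mul_le_mul_of_nonneg_right hx2 (sq_nonneg _)

lemma my_int_re (d : ℕ) {u v : Dom d → ℂ} (hu : MemA d u) (hv : MemA d v) :
    Integrable (fun x => (((starRingEnd ℂ) (u x) * v x).re)^2) (volume : Measure (Dom d)) := by
  refine Integrable.mono' (my_int_prod d hu hv)
    (((Complex.continuous_re.comp_aestronglyMeasurable
      (((Complex.continuous_conj.comp_aestronglyMeasurable hu.1.aestronglyMeasurable)).mul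
        hv.1.aestronglyMeasurable))).pow 2) ?_
  filter_upwards with x
  have h1 : |((starRingEnd ℂ) (u x) * v x).re| ≤ ‖(starRingEnd ℂ) (u x) * v x‖ :=
    Complex.abs_re_le_norm _
  have h2 : ‖(starRingEnd ℂ) (u x) * v x‖ = ‖u x‖ * ‖v x‖ := by
    rw [norm_mul, RCLike.norm_conj]
  have h3 : ((starRingEnd ℂ) (u x) * v x).re ^ 2 ≤ ‖(starRingEnd ℂ) (u x) * v x‖^2 := by
    rw [← _root_.sq_abs]; exact pow_le_pow_left₀ (abs_nonneg _) h1 2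
  rw [Real.norm_eq_abs, _root_.abs_of_nonneg (sq_nonneg _)]
  calc ((starRingEnd ℂ) (u x) * v x).re ^ 2 ≤ ‖(starRingEnd ℂ) (u x) * v x‖^2 := h3
  _ = ‖u x‖^2 * ‖v x‖^2 := by rw [h2]; ring


/-- Lemma 11 of the paper: if the linear map `T : 𝒜 → 𝒜` preserves power
inner products and `I₁, I₂` are measurable sets of finite measure with `|I₁ ∩ I₂| = 0`,
then `|τ(I₁) ∩ τ(I₂)| = 0`. -/
theorem statement12 (d : ℕ) (hd : 1 ≤ d)
    (T : (Dom d → ℂ) → (Dom d → ℂ))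
    (hTmem : ∀ f, MemA d f → MemA d (T f))
    (hTae : ∀ f g, MemA d f → MemA d g → f =ᵐ[(volume : Measure (Dom d))] g →
      T f =ᵐ[(volume : Measure (Dom d))] T g)
    (hTadd : ∀ f g, MemA d f → MemA d g →
      T (f + g) =ᵐ[(volume : Measure (Dom d))] T f + T g)
    (hTsmul : ∀ (a : ℂ) (f : Dom d → ℂ), MemA d f →
      T (a • f) =ᵐ[(volume : Measure (Dom d))] a • T f)
    (hppip : ∀ k : ℕ, 1 ≤ k → ∀ f g, MemA d f → MemA d g →
      pip d (T f) (T g) k = pip d f g k)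
    (I₁ I₂ : Set (Dom d)) (hI₁ : MeasurableSet I₁) (hI₂ : MeasurableSet I₂)
    (hI₁fin : volume I₁ < ⊤) (hI₂fin : volume I₂ < ⊤)
    (hdisj : volume (I₁ ∩ I₂) = 0) :
    volume (tau d T I₁ ∩ tau d T I₂) = 0 := by
  classical
  set f : Dom d → ℂ := chi d I₁ with hf
  set g : Dom d → ℂ := chi d I₂ with hg
  have hchi : ∀ (I : Set (Dom d)), MeasurableSet I → volume I < ⊤ → MemA d (chi d I) := by
    intro I hI hIfin
    constructor <;> exact memLp_indicator_const _ hI 1 (Or.inr hIfin.ne)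
  have hMf : MemA d f := hchi I₁ hI₁ hI₁fin
  have hMg : MemA d g := hchi I₂ hI₂ hI₂fin
  have hMA_add : ∀ {a b : Dom d → ℂ}, MemA d a → MemA d b → MemA d (a + b) :=
    fun ha hb => ⟨ha.1.add hb.1, ha.2.add hb.2⟩
  have hMA_sub : ∀ {a b : Dom d → ℂ}, MemA d a → MemA d b → MemA d (a - b) :=
    fun ha hb => ⟨ha.1.sub hb.1, ha.2.sub hb.2⟩
  set u : Dom d → ℂ := T f with hu
  set v : Dom d → ℂ := T g with hv
  have hMu : MemA d u := hTmem f hMf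
  have hMv : MemA d v := hTmem g hMg
  -- a.e. disjointness of f and g
  have hfg0 : ∀ᵐ x ∂(volume : Measure (Dom d)), f x = 0 ∨ g x = 0 := by
    rw [ae_iff]
    refine measure_mono_null ?_ hdisj
    intro x hx
    simp only [Set.mem_setOf_eq, not_or] at hx
    constructor
    · by_contra h
      exact hx.1 (by simp [hf, chi, Set.indicator_of_notMem h])
    · by_contra h
      exact hx.2 (by simp [hg, chi, Set.indicator_of_notMem h])
  -- pip preservation at k = 2 as real fourth-moment preservation
  have key : ∀ (h : Dom d → ℂ), MemA d h →
      (∫ x : Dom d, ‖T h x‖^4) = ∫ x : Dom d, ‖h x‖^4 := by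
    intro h hm
    have h2 := hppip 2 (by norm_num) h h hm hm
    rw [my_pip_self, my_pip_self] at h2
    exact_mod_cast h2
  -- T(f+g) and T(f-g) a.e. descriptions
  have huv : T (f + g) =ᵐ[(volume : Measure (Dom d))] u + v := hTadd f g hMf hMg
  have huv' : T (f - g) =ᵐ[(volume : Measure (Dom d))] u - v := by
    have e : f - g = f + (-1 : ℂ) • g := by funext x; simp [sub_eq_add_neg]
    have hMg' : MemA d ((-1 : ℂ) • g) := ⟨hMg.1.const_smul _, hMg.2.const_smul _⟩
    calc T (f - g) = T (f + (-1 : ℂ) • g) := by rw [← e]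
      _ =ᵐ[(volume : Measure (Dom d))] T f + T ((-1 : ℂ) • g) := hTadd f _ hMf hMg'
      _ =ᵐ[(volume : Measure (Dom d))] u - v := by
          filter_upwards [hTsmul (-1) g hMg] with x hx
          simp only [Pi.add_apply, Pi.sub_apply, hx, Pi.smul_apply, smul_eq_mul, ← hu, ← hv]
          ring
  -- fourth moments of f ± g
  have hif : Integrable (fun x => ‖f x‖^4) (volume : Measure (Dom d)) := my_int_pow4 d hMf
  have hig : Integrable (fun x => ‖g x‖^4) (volume : Measure (Dom d)) := my_int_pow4 d hMg
  have Nfpg : (∫ x : Dom d, ‖(f+g) x‖^4) = (∫ x : Dom d, ‖f x‖^4) + ∫ x : Dom d, ‖g x‖^4 := by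
    have e : (fun x => ‖(f+g) x‖^4)
        =ᵐ[(volume : Measure (Dom d))] fun x => ‖f x‖^4 + ‖g x‖^4 := by
      filter_upwards [hfg0] with x hx
      rcases hx with h | h <;> simp [Pi.add_apply, h]
    rw [integral_congr_ae e, integral_add hif hig]
  have Nfmg : (∫ x : Dom d, ‖(f-g) x‖^4) = (∫ x : Dom d, ‖f x‖^4) + ∫ x : Dom d, ‖g x‖^4 := by
    have e : (fun x => ‖(f-g) x‖^4)
        =ᵐ[(volume : Measure (Dom d))] fun x => ‖f x‖^4 + ‖g x‖^4 := by
      filter_upwards [hfg0] with x hx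
      rcases hx with h | h <;> simp [Pi.sub_apply, h]
    rw [integral_congr_ae e, integral_add hif hig]
  -- transfer the T-side integrals along the a.e. equalities
  have Epg : (∫ x : Dom d, ‖(u+v) x‖^4) = (∫ x : Dom d, ‖f x‖^4) + ∫ x : Dom d, ‖g x‖^4 := by
    have h1 := key (f+g) (hMA_add hMf hMg)
    have h2 : (∫ x : Dom d, ‖T (f+g) x‖^4) = ∫ x : Dom d, ‖(u+v) x‖^4 :=
      integral_congr_ae (huv.mono fun x hx => by dsimp only; rw [hx])
    rw [← h2, h1, Nfpg]
  have Emg : (∫ x : Dom d, ‖(u-v) x‖^4) = (∫ x : Dom d, ‖f x‖^4) + ∫ x : Dom d, ‖g x‖^4 := by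
    have h1 := key (f-g) (hMA_sub hMf hMg)
    have h2 : (∫ x : Dom d, ‖T (f-g) x‖^4) = ∫ x : Dom d, ‖(u-v) x‖^4 :=
      integral_congr_ae (huv'.mono fun x hx => by dsimp only; rw [hx])
    rw [← h2, h1, Nfmg]
  have Eu : (∫ x : Dom d, ‖u x‖^4) = ∫ x : Dom d, ‖f x‖^4 := key f hMf
  have Ev : (∫ x : Dom d, ‖v x‖^4) = ∫ x : Dom d, ‖g x‖^4 := key g hMg
  -- integrability on the u,v side
  have hintuv : Integrable (fun x => ‖u x‖^2 * ‖v x‖^2) (volume : Measure (Dom d)) :=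
    my_int_prod d hMu hMv
  have hintre : Integrable (fun x => (((starRingEnd ℂ) (u x) * v x).re)^2)
      (volume : Measure (Dom d)) := my_int_re d hMu hMv
  have hintP : Integrable
      (fun x => 4*(‖u x‖^2 * ‖v x‖^2) + 8*(((starRingEnd ℂ) (u x) * v x).re)^2)
      (volume : Measure (Dom d)) := (hintuv.const_mul 4).add (hintre.const_mul 8)
  have hiu : Integrable (fun x => ‖u x‖^4) (volume : Measure (Dom d)) := my_int_pow4 d hMu
  have hiv : Integrable (fun x => ‖v x‖^4) (volume : Measure (Dom d)) := my_int_pow4 d hMv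
  -- the splitting identity
  have split : (∫ x : Dom d, ‖(u+v) x‖^4) + (∫ x : Dom d, ‖(u-v) x‖^4)
      = (2 * (∫ x : Dom d, ‖u x‖^4) + 2 * (∫ x : Dom d, ‖v x‖^4))
        + ∫ x : Dom d, (4*(‖u x‖^2 * ‖v x‖^2)
            + 8*(((starRingEnd ℂ) (u x) * v x).re)^2) := by
    have i1 : Integrable (fun x => ‖(u+v) x‖^4) (volume : Measure (Dom d)) :=
      my_int_pow4 d (hMA_add hMu hMv)
    have i2 : Integrable (fun x => ‖(u-v) x‖^4) (volume : Measure (Dom d)) :=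
      my_int_pow4 d (hMA_sub hMu hMv)
    rw [← integral_add i1 i2]
    have e : (fun x => ‖(u+v) x‖^4 + ‖(u-v) x‖^4)
        = fun x => (2*‖u x‖^4 + 2*‖v x‖^4)
            + (4*(‖u x‖^2 * ‖v x‖^2) + 8*(((starRingEnd ℂ) (u x) * v x).re)^2) := by
      funext x
      have := my_norm_identity (u x) (v x)
      simp only [Pi.add_apply, Pi.sub_apply]
      linarith
    have j1 : Integrable (fun x : Dom d => 2*‖u x‖^4 + 2*‖v x‖^4) volume :=
      (hiu.const_mul 2).add (hiv.const_mul 2)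
    rw [e, integral_add j1 hintP, integral_add (hiu.const_mul 2) (hiv.const_mul 2),
      integral_const_mul, integral_const_mul]
  have hP0 : (∫ x : Dom d, (4*(‖u x‖^2 * ‖v x‖^2)
      + 8*(((starRingEnd ℂ) (u x) * v x).re)^2)) = 0 := by
    rw [Epg, Emg] at split
    linarith [split, Eu, Ev]
  -- conclude the integrand vanishes a.e.
  have hae : (fun x => 4*(‖u x‖^2 * ‖v x‖^2) + 8*(((starRingEnd ℂ) (u x) * v x).re)^2)
      =ᵐ[(volume : Measure (Dom d))] 0 := by
    refine (integral_eq_zero_iff_of_nonneg ?_ hintP).1 hP0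
    intro x
    simp only [Pi.zero_apply]
    positivity
  have hnull : volume {x : Dom d |
      ¬ (4*(‖u x‖^2 * ‖v x‖^2) + 8*(((starRingEnd ℂ) (u x) * v x).re)^2 = 0)} = 0 := by
    have := hae
    rw [Filter.EventuallyEq, ae_iff] at this
    simpa using this
  refine measure_mono_null ?_ hnull
  intro x hx
  simp only [tau, Set.mem_inter_iff, Set.mem_setOf_eq, ← hf, ← hg, ← hu, ← hv] at hx
  simp only [Set.mem_setOf_eq]
  intro h0
  have h1 : (0:ℝ) < ‖u x‖^2 * ‖v x‖^2 :=
    mul_pos (pow_pos (norm_pos_iff.2 hx.1) 2) (pow_pos (norm_pos_iff.2 hx.2) 2)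
  nlinarith [sq_nonneg (((starRingEnd ℂ) (u x) * v x).re)]
end
end
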